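/- arXiv:1103.2218 — 4 statements merged into one kernel-verified Lean document; each statement's English description precedes it below -/
import Mathlib

section
/- Let G = (V,E) be a finite graph and e ∈ E an edge of G. Then the covered components polynomial satisfies the recurrence C(G,x,y,z) = C(G₋ₑ,x,y,z) + y·C(G/ₑ,x,y,z) + (xyz − xy)·C(G†ₑ,x,y,z), where G₋ₑ is G with e deleted, G/ₑ is G with e contracted (the edge removed and its endpoints merged), and G†ₑ is G with e extracted (e and both its incident vertices removed). -/
open MvPolynomial Finset
open scoped Classical

noncomputable section

/-- A finite multigraph: a finite vertex set `verts` in an ambient type `α`, a finite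
edge set `edges` in an index type `β` (so parallel edges are allowed), and an endpoint
map `ends` sending each edge to an unordered pair of vertices (loops are allowed). -/
structure Multigraph (α β : Type) where
  verts : Finset α
  edges : Finset β
  ends : β → Sym2 α
  ends_mem : ∀ f ∈ edges, ∀ v ∈ ends f, v ∈ verts

namespace Multigraph

variable {α β : Type}

/-- The simple graph underlying the spanning subgraph with edge set `A`. -/
def sg (G : Multigraph α β) (A : Finset β) : SimpleGraph α :=
  SimpleGraph.fromEdgeSet {s | ∃ f ∈ A, G.ends f = s}

/-- A connected component of the spanning subgraph `⟨A⟩` is covered if it contains an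
endpoint of an edge of `A`. -/
def covered (G : Multigraph α β) (A : Finset β) (c : (G.sg A).ConnectedComponent) : Prop :=
  ∃ f ∈ A, ∃ v, v ∈ G.ends f ∧ (G.sg A).connectedComponentMk v = c

/-- `c(⟨A⟩)`: the number of covered components of the spanning subgraph `⟨A⟩`. -/
def nCov (G : Multigraph α β) (A : Finset β) : ℕ :=
  Nat.card {c : (G.sg A).ConnectedComponent // G.covered A c}

/-- `k(⟨A⟩)`: the number of connected components of the spanning subgraph `⟨A⟩`,
i.e. the covered components together with the isolated vertices. -/
def nComp (G : Multigraph α β) (A : Finset β) : ℕ :=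
  G.nCov A + (G.verts.filter (fun v => ∀ f ∈ A, v ∉ G.ends f)).card

/-- The covered components polynomial
`C(G,x,y,z) = ∑_{A ⊆ E} x^{k(⟨A⟩)} y^{|A|} z^{c(⟨A⟩)}`, with `x = X 0`, `y = X 1`,
`z = X 2`. -/
def ccp (G : Multigraph α β) : MvPolynomial (Fin 3) ℤ :=
  ∑ A ∈ G.edges.powerset, X 0 ^ G.nComp A * X 1 ^ A.card * X 2 ^ G.nCov A

/-- `G₋ₑ`: deletion of the edge `e`. -/
def delete (G : Multigraph α β) (e : β) : Multigraph α β where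
  verts := G.verts
  edges := G.edges.erase e
  ends := G.ends
  ends_mem := fun f hf => G.ends_mem f (Finset.mem_of_mem_erase hf)

/-- `G/ₑ`: contraction of the edge `e` with endpoints `v₁`, `v₂`:
the edge is removed and `v₂` is merged into `v₁`. -/
def contract (G : Multigraph α β) (e : β) (v₁ v₂ : α) : Multigraph α β where
  verts := insert v₁ (G.verts.erase v₂)
  edges := G.edges.erase e
  ends := fun f => Sym2.map (fun w => if w = v₂ then v₁ else w) (G.ends f)
  ends_mem := by
    intro f hf v hv
    obtain ⟨w, hw, rfl⟩ := Sym2.mem_map.mp hv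
    by_cases h : w = v₂
    · simp [h]
    · simp only [if_neg h]
      exact Finset.mem_insert_of_mem
        (Finset.mem_erase.mpr ⟨h, G.ends_mem f (Finset.mem_of_mem_erase hf) w hw⟩)

/-- `G†ₑ`: extraction of an edge with endpoints `v₁`, `v₂`: the vertices `v₁`, `v₂`
and all edges incident to them (in particular the edge itself) are removed. -/
def extract (G : Multigraph α β) (v₁ v₂ : α) : Multigraph α β where
  verts := (G.verts.erase v₁).erase v₂
  edges := G.edges.filter (fun f => v₁ ∉ G.ends f ∧ v₂ ∉ G.ends f)
  ends := G.ends
  ends_mem := by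
    intro f hf v hv
    rw [Finset.mem_filter] at hf
    refine Finset.mem_erase.mpr ⟨?_, Finset.mem_erase.mpr ⟨?_, G.ends_mem f hf.1 v hv⟩⟩
    · rintro rfl; exact hf.2.2 hv
    · rintro rfl; exact hf.2.1 hv

/-- `G₋ᵥ`: deletion of the vertex `v` together with all incident edges. -/
def deleteVert (G : Multigraph α β) (v : α) : Multigraph α β where
  verts := G.verts.erase v
  edges := G.edges.filter (fun f => v ∉ G.ends f)
  ends := G.ends
  ends_mem := by
    intro f hf w hw
    rw [Finset.mem_filter] at hf
    exact Finset.mem_erase.mpr ⟨by rintro rfl; exact hf.2 hw, G.ends_mem f hf.1 w hw⟩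

/-- Disjoint union of two multigraphs. -/
def disjUnion {α' β' : Type} (G : Multigraph α β) (H : Multigraph α' β') :
    Multigraph (α ⊕ α') (β ⊕ β') where
  verts := G.verts.disjSum H.verts
  edges := G.edges.disjSum H.edges
  ends := Sum.elim (fun f => (G.ends f).map Sum.inl) (fun f => (H.ends f).map Sum.inr)
  ends_mem := by
    intro f hf v hv
    rcases f with f | f
    · simp only [Sum.elim_inl] at hv
      obtain ⟨w, hw, rfl⟩ := Sym2.mem_map.mp hv
      exact Finset.inl_mem_disjSum.mpr
        (G.ends_mem f (Finset.inl_mem_disjSum.mp hf) w hw)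
    · simp only [Sum.elim_inr] at hv
      obtain ⟨w, hw, rfl⟩ := Sym2.mem_map.mp hv
      exact Finset.inr_mem_disjSum.mpr
        (H.ends_mem f (Finset.inr_mem_disjSum.mp hf) w hw)

/-- `K₁`: the one-vertex graph. -/
def K1 : Multigraph Unit Empty where
  verts := Finset.univ
  edges := ∅
  ends := fun f => f.elim
  ends_mem := fun f hf => absurd hf (Finset.notMem_empty f)

end Multigraph



namespace CCPAux

open Multigraph SimpleGraph

variable {α β : Type}

lemma exists_pair (s : Sym2 α) : ∃ x y, s = s(x, y) :=
  Sym2.ind (fun x y => ⟨x, y, rfl⟩) s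

lemma sym2_map_eq_self {f : α → α} {s : Sym2 α} (h : ∀ a ∈ s, f a = a) :
    Sym2.map f s = s := by
  obtain ⟨x, y, rfl⟩ := exists_pair s
  rw [Sym2.map_pair_eq, h x (by simp), h y (by simp)]

lemma sg_adj (G : Multigraph α β) (A : Finset β) (u w : α) :
    (G.sg A).Adj u w ↔ (∃ f ∈ A, G.ends f = s(u, w)) ∧ u ≠ w := by
  simp [Multigraph.sg, SimpleGraph.fromEdgeSet_adj, Set.mem_setOf_eq]

lemma nCov_eq_ncard (G : Multigraph α β) (A : Finset β) :
    G.nCov A = {c | G.covered A c}.ncard := rfl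

lemma covered_finite (G : Multigraph α β) (A : Finset β) :
    {c | G.covered A c}.Finite := by
  have h : {c | G.covered A c} ⊆
      (fun v => (G.sg A).connectedComponentMk v) ''
        (⋃ f ∈ (A : Set β), {v | v ∈ G.ends f}) := by
    rintro c ⟨f, hf, v, hv, rfl⟩
    exact ⟨v, Set.mem_biUnion hf hv, rfl⟩
  refine Set.Finite.subset (Set.Finite.image _ ?_) h
  refine Set.Finite.biUnion A.finite_toSet fun f _ => ?_
  obtain ⟨x, y, hxy⟩ := exists_pair (G.ends f)
  rw [hxy]
  have : {v | v ∈ s(x, y)} = {x, y} := by ext v; simp [Sym2.mem_iff]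
  rw [this]
  exact (Set.finite_singleton _).insert _

lemma nCov_congr (G₁ G₂ : Multigraph α β) (A : Finset β)
    (h : ∀ f ∈ A, G₁.ends f = G₂.ends f) : G₁.nCov A = G₂.nCov A := by
  have hsg : G₁.sg A = G₂.sg A := by
    unfold Multigraph.sg
    congr 1
    ext s
    constructor <;> rintro ⟨f, hf, hs⟩
    · exact ⟨f, hf, (h f hf).symm.trans hs⟩
    · exact ⟨f, hf, (h f hf).trans hs⟩
  unfold Multigraph.nCov Multigraph.covered
  rw [hsg]
  refine Nat.card_congr (Equiv.subtypeEquivRight fun c => ?_)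
  constructor <;> rintro ⟨f, hf, v, hv, hc⟩
  · exact ⟨f, hf, v, (h f hf) ▸ hv, hc⟩
  · exact ⟨f, hf, v, (h f hf).symm ▸ hv, hc⟩

/-- The contraction map on vertices. -/
def qmap (v₁ v₂ : α) (w : α) : α := if w = v₂ then v₁ else w

lemma qmap_v₁ (v₁ v₂ : α) : qmap v₁ v₂ v₁ = v₁ := by
  unfold qmap; split <;> rfl

lemma qmap_v₂ (v₁ v₂ : α) : qmap v₁ v₂ v₂ = v₁ := if_pos rfl

lemma qmap_eq_self (v₁ v₂ : α) {w : α} (h : w ≠ v₂) : qmap v₁ v₂ w = w := if_neg h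

lemma contract_ends (G : Multigraph α β) (e : β) (v₁ v₂ : α) (f : β) :
    (G.contract e v₁ v₂).ends f = Sym2.map (qmap v₁ v₂) (G.ends f) := rfl

lemma contract_verts (G : Multigraph α β) (e : β) (v₁ v₂ : α) :
    (G.contract e v₁ v₂).verts = insert v₁ (G.verts.erase v₂) := rfl

lemma extract_verts (G : Multigraph α β) (v₁ v₂ : α) :
    (G.extract v₁ v₂).verts = (G.verts.erase v₁).erase v₂ := rfl

section Core

variable (G : Multigraph α β) (e : β) (v₁ v₂ : α)

lemma mem_ends_e {v : α} (hends : G.ends e = s(v₁, v₂)) (hv : v ∈ G.ends e) :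
    v = v₁ ∨ v = v₂ := by
  rw [hends, Sym2.mem_iff] at hv
  exact hv

lemma qmap_of_mem_e {v : α} (hends : G.ends e = s(v₁, v₂)) (hv : v ∈ G.ends e) :
    qmap v₁ v₂ v = v₁ := by
  rcases mem_ends_e G e v₁ v₂ hends hv with h | h
  · rw [h, qmap_v₁]
  · rw [h, qmap_v₂]

lemma reach_qmap (hends : G.ends e = s(v₁, v₂)) (B : Finset β) (u : α) :
    (G.sg (insert e B)).Reachable u (qmap v₁ v₂ u) := by
  by_cases h2 : u = v₂
  · rw [h2, qmap_v₂]
    by_cases h12 : v₁ = v₂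
    · rw [h12]
    · refine SimpleGraph.Adj.reachable ((sg_adj G _ _ _).mpr
        ⟨⟨e, Finset.mem_insert_self _ _, ?_⟩, Ne.symm h12⟩)
      rw [hends, Sym2.eq_swap]
  · rw [qmap_eq_self _ _ h2]

lemma reach_forward (hends : G.ends e = s(v₁, v₂)) (B : Finset β) {u w : α}
    (h : (G.sg (insert e B)).Reachable u w) :
    ((G.contract e v₁ v₂).sg B).Reachable (qmap v₁ v₂ u) (qmap v₁ v₂ w) := by
  obtain ⟨p⟩ := h
  induction p with
  | nil => exact Reachable.refl _
  | @cons u x w hadj p ih =>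
    refine Reachable.trans ?_ ih
    rw [sg_adj] at hadj
    obtain ⟨⟨f, hf, hef⟩, hne⟩ := hadj
    rcases Finset.mem_insert.mp hf with hfe | hfB
    · rw [hfe] at hef
      have hu' : u ∈ G.ends e := by rw [hef]; simp
      have hx' : x ∈ G.ends e := by rw [hef]; simp
      rw [qmap_of_mem_e G e v₁ v₂ hends hu', qmap_of_mem_e G e v₁ v₂ hends hx']
    · by_cases hq : qmap v₁ v₂ u = qmap v₁ v₂ x
      · rw [hq]
      · refine SimpleGraph.Adj.reachable ((sg_adj _ _ _ _).mpr ⟨⟨f, hfB, ?_⟩, hq⟩)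
        rw [contract_ends, hef, Sym2.map_pair_eq]

lemma reach_backward (hends : G.ends e = s(v₁, v₂)) (B : Finset β) {a b : α}
    (h : ((G.contract e v₁ v₂).sg B).Reachable a b) :
    (G.sg (insert e B)).Reachable a b := by
  obtain ⟨p⟩ := h
  induction p with
  | nil => exact Reachable.refl _
  | @cons a x b hadj p ih =>
    refine Reachable.trans ?_ ih
    rw [sg_adj] at hadj
    obtain ⟨⟨f, hf, hef⟩, hne⟩ := hadj
    obtain ⟨y, z, hyz⟩ := exists_pair (G.ends f)
    rw [contract_ends, hyz, Sym2.map_pair_eq] at hef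
    have hyz' : y ≠ z := by
      rintro rfl
      obtain ⟨h1, h2⟩ | ⟨h1, h2⟩ := Sym2.eq_iff.mp hef
      · exact hne (h1.symm.trans h2)
      · exact hne (h2.symm.trans h1)
    have hadjyz : (G.sg (insert e B)).Adj y z :=
      (sg_adj _ _ _ _).mpr ⟨⟨f, Finset.mem_insert_of_mem hf, hyz⟩, hyz'⟩
    obtain ⟨h1, h2⟩ | ⟨h1, h2⟩ := Sym2.eq_iff.mp hef
    · exact ((h1 ▸ reach_qmap G e v₁ v₂ hends B y).symm.trans hadjyz.reachable).trans
        (h2 ▸ reach_qmap G e v₁ v₂ hends B z)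
    · exact ((h2 ▸ reach_qmap G e v₁ v₂ hends B z).symm.trans hadjyz.reachable.symm).trans
        (h1 ▸ reach_qmap G e v₁ v₂ hends B y)

lemma reach_iff (hends : G.ends e = s(v₁, v₂)) (B : Finset β) (u w : α) :
    (G.sg (insert e B)).Reachable u w ↔
      ((G.contract e v₁ v₂).sg B).Reachable (qmap v₁ v₂ u) (qmap v₁ v₂ w) := by
  constructor
  · exact reach_forward G e v₁ v₂ hends B
  · intro h
    exact ((reach_qmap G e v₁ v₂ hends B u).trans
      (reach_backward G e v₁ v₂ hends B h)).trans (reach_qmap G e v₁ v₂ hends B w).symm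

/-- The induced map on connected components. -/
def ccMap (hends : G.ends e = s(v₁, v₂)) (B : Finset β) :
    (G.sg (insert e B)).ConnectedComponent → ((G.contract e v₁ v₂).sg B).ConnectedComponent :=
  ConnectedComponent.lift
    (fun v => ((G.contract e v₁ v₂).sg B).connectedComponentMk (qmap v₁ v₂ v))
    (fun _ _ p _ => ConnectedComponent.eq.mpr (reach_forward G e v₁ v₂ hends B p.reachable))

lemma ccMap_mk (hends : G.ends e = s(v₁, v₂)) (B : Finset β) (v : α) :
    ccMap G e v₁ v₂ hends B ((G.sg (insert e B)).connectedComponentMk v) =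
      ((G.contract e v₁ v₂).sg B).connectedComponentMk (qmap v₁ v₂ v) := rfl

lemma ccMap_injective (hends : G.ends e = s(v₁, v₂)) (B : Finset β) :
    Function.Injective (ccMap G e v₁ v₂ hends B) := by
  intro c d
  refine ConnectedComponent.ind₂ (fun u w h => ?_) c d
  rw [ccMap_mk, ccMap_mk, ConnectedComponent.eq] at h
  exact ConnectedComponent.eq.mpr ((reach_iff G e v₁ v₂ hends B u w).mpr h)

lemma ccMap_image (hends : G.ends e = s(v₁, v₂)) (B : Finset β) :
    ccMap G e v₁ v₂ hends B ''
        {c | ∃ f ∈ B, ∃ v, v ∈ G.ends f ∧ (G.sg (insert e B)).connectedComponentMk v = c}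
      = {c | (G.contract e v₁ v₂).covered B c} := by
  ext c'
  simp only [Set.mem_image, Set.mem_setOf_eq, Multigraph.covered]
  constructor
  · rintro ⟨c, ⟨f, hfB, v, hv, rfl⟩, rfl⟩
    refine ⟨f, hfB, qmap v₁ v₂ v, ?_, (ccMap_mk G e v₁ v₂ hends B v).symm⟩
    rw [contract_ends]
    exact Sym2.mem_map.mpr ⟨v, hv, rfl⟩
  · rintro ⟨f, hfB, w, hw, rfl⟩
    rw [contract_ends] at hw
    obtain ⟨v, hv, rfl⟩ := Sym2.mem_map.mp hw
    exact ⟨(G.sg (insert e B)).connectedComponentMk v, ⟨f, hfB, v, hv, rfl⟩, rfl⟩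

lemma reach_v₁v₂ (hends : G.ends e = s(v₁, v₂)) (B : Finset β) {v : α}
    (hv : v ∈ G.ends e) :
    (G.sg (insert e B)).Reachable v v₁ := by
  have h := reach_qmap G e v₁ v₂ hends B v
  rwa [qmap_of_mem_e G e v₁ v₂ hends hv] at h

lemma nCov_touch (hends : G.ends e = s(v₁, v₂)) (B : Finset β)
    (ht : ∃ f ∈ B, v₁ ∈ G.ends f ∨ v₂ ∈ G.ends f) :
    G.nCov (insert e B) = (G.contract e v₁ v₂).nCov B := by
  have hset : {c | G.covered (insert e B) c}
      = {c | ∃ f ∈ B, ∃ v, v ∈ G.ends f ∧ (G.sg (insert e B)).connectedComponentMk v = c} := by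
    ext c
    simp only [Set.mem_setOf_eq, Multigraph.covered]
    constructor
    · rintro ⟨f, hf, v, hv, rfl⟩
      rcases Finset.mem_insert.mp hf with hfe | hfB
      · rw [hfe] at hv
        obtain ⟨f₀, hf₀, hw⟩ := ht
        have hr : (G.sg (insert e B)).connectedComponentMk v
            = (G.sg (insert e B)).connectedComponentMk v₁ :=
          ConnectedComponent.eq.mpr (reach_v₁v₂ G e v₁ v₂ hends B hv)
        rcases hw with hw | hw
        · exact ⟨f₀, hf₀, v₁, hw, hr.symm⟩
        · refine ⟨f₀, hf₀, v₂, hw, ?_⟩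
          rw [hr]
          exact ConnectedComponent.eq.mpr (reach_v₁v₂ G e v₁ v₂ hends B
            (v := v₂) (by rw [hends]; simp))
      · exact ⟨f, hfB, v, hv, rfl⟩
    · rintro ⟨f, hfB, v, hv, rfl⟩
      exact ⟨f, Finset.mem_insert_of_mem hfB, v, hv, rfl⟩
  rw [nCov_eq_ncard, nCov_eq_ncard, hset, ← ccMap_image G e v₁ v₂ hends B,
    Set.ncard_image_of_injective _ (ccMap_injective G e v₁ v₂ hends B)]

lemma walk_untouch (hends : G.ends e = s(v₁, v₂)) (B : Finset β)
    (hu : ∀ f ∈ B, v₁ ∉ G.ends f ∧ v₂ ∉ G.ends f) :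
    ∀ {x u : α}, (G.sg (insert e B)).Walk x u → x = v₁ ∨ x = v₂ → u = v₁ ∨ u = v₂ := by
  intro x u p
  induction p with
  | nil => exact id
  | @cons x y u hadj p ih =>
    intro hx
    apply ih
    rw [sg_adj] at hadj
    obtain ⟨⟨f, hf, hef⟩, hne⟩ := hadj
    rcases Finset.mem_insert.mp hf with hfe | hfB
    · rw [hfe] at hef
      have hy : y ∈ G.ends e := by rw [hef]; simp
      exact mem_ends_e G e v₁ v₂ hends hy
    · exfalso
      have hxm : x ∈ G.ends f := by rw [hef]; simp
      rcases hx with hx | hx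
      · exact (hu f hfB).1 (hx ▸ hxm)
      · exact (hu f hfB).2 (hx ▸ hxm)

lemma nCov_untouch (hends : G.ends e = s(v₁, v₂)) (B : Finset β)
    (hu : ∀ f ∈ B, v₁ ∉ G.ends f ∧ v₂ ∉ G.ends f) :
    G.nCov (insert e B) = (G.contract e v₁ v₂).nCov B + 1 := by
  set K := (G.sg (insert e B)).connectedComponentMk v₁ with hK
  set S₀ : Set ((G.sg (insert e B)).ConnectedComponent) :=
    {c | ∃ f ∈ B, ∃ v, v ∈ G.ends f ∧ (G.sg (insert e B)).connectedComponentMk v = c} with hS₀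
  have hKS₀ : K ∉ S₀ := by
    rintro ⟨f, hfB, v, hv, hc⟩
    have hreach : (G.sg (insert e B)).Reachable v₁ v :=
      ConnectedComponent.exact (hK ▸ hc.symm)
    obtain ⟨p⟩ := hreach
    rcases walk_untouch G e v₁ v₂ hends B hu p (Or.inl rfl) with h | h
    · exact (hu f hfB).1 (h ▸ hv)
    · exact (hu f hfB).2 (h ▸ hv)
  have hS : {c | G.covered (insert e B) c} = insert K S₀ := by
    ext c
    simp only [Set.mem_setOf_eq, Set.mem_insert_iff, Multigraph.covered, hS₀]
    constructor
    · rintro ⟨f, hf, v, hv, rfl⟩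
      rcases Finset.mem_insert.mp hf with hfe | hfB
      · exact Or.inl (ConnectedComponent.eq.mpr
          (reach_v₁v₂ G e v₁ v₂ hends B (hfe ▸ hv)))
      · exact Or.inr ⟨f, hfB, v, hv, rfl⟩
    · rintro (rfl | ⟨f, hfB, v, hv, rfl⟩)
      · exact ⟨e, Finset.mem_insert_self _ _, v₁, by rw [hends]; simp, rfl⟩
      · exact ⟨f, Finset.mem_insert_of_mem hfB, v, hv, rfl⟩
  have hfin : S₀.Finite := by
    refine Set.Finite.subset (covered_finite G (insert e B)) ?_
    rintro c ⟨f, hfB, v, hv, rfl⟩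
    exact ⟨f, Finset.mem_insert_of_mem hfB, v, hv, rfl⟩
  rw [nCov_eq_ncard, nCov_eq_ncard, hS, Set.ncard_insert_of_notMem hKS₀ hfin,
    ← ccMap_image G e v₁ v₂ hends B,
    Set.ncard_image_of_injective _ (ccMap_injective G e v₁ v₂ hends B)]

lemma iso_touch (hends : G.ends e = s(v₁, v₂)) (B : Finset β)
    (ht : ∃ f ∈ B, v₁ ∈ G.ends f ∨ v₂ ∈ G.ends f) :
    (G.verts.filter fun v => ∀ f ∈ insert e B, v ∉ G.ends f)
      = ((G.contract e v₁ v₂).verts.filter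
          fun v => ∀ f ∈ B, v ∉ (G.contract e v₁ v₂).ends f) := by
  ext v
  simp only [Finset.mem_filter, contract_verts, Finset.mem_insert, Finset.mem_erase]
  constructor
  · rintro ⟨hv, hiso⟩
    have hv1 : v ≠ v₁ := fun h =>
      hiso e (Or.inl rfl) (by rw [hends, h]; simp)
    have hv2 : v ≠ v₂ := fun h =>
      hiso e (Or.inl rfl) (by rw [hends, h]; simp)
    refine ⟨Or.inr ⟨hv2, hv⟩, fun f hfB hmem => ?_⟩
    rw [contract_ends] at hmem
    obtain ⟨w, hw, hqw⟩ := Sym2.mem_map.mp hmem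
    unfold qmap at hqw
    split at hqw
    · exact hv1 hqw.symm
    · exact hiso f (Or.inr hfB) (hqw ▸ hw)
  · rintro ⟨hv, hiso⟩
    have hv1 : v ≠ v₁ := by
      rintro rfl
      obtain ⟨f₀, hf₀, hw⟩ := ht
      refine hiso f₀ hf₀ ?_
      rw [contract_ends]
      rcases hw with hw | hw
      · exact Sym2.mem_map.mpr ⟨v, hw, qmap_v₁ _ _⟩
      · exact Sym2.mem_map.mpr ⟨v₂, hw, qmap_v₂ _ _⟩
    rcases hv with hv | ⟨hv2, hv⟩
    · exact absurd hv hv1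
    · refine ⟨hv, fun f hf hmem => ?_⟩
      rcases hf with hfe | hfB
      · rcases mem_ends_e G e v₁ v₂ hends (hfe ▸ hmem) with h | h
        · exact hv1 h
        · exact hv2 h
      · refine hiso f hfB ?_
        rw [contract_ends]
        exact Sym2.mem_map.mpr ⟨v, hmem, qmap_eq_self _ _ hv2⟩

lemma iso_untouch (hends : G.ends e = s(v₁, v₂)) (B : Finset β)
    (hu : ∀ f ∈ B, v₁ ∉ G.ends f ∧ v₂ ∉ G.ends f) :
    ((G.contract e v₁ v₂).verts.filter
        fun v => ∀ f ∈ B, v ∉ (G.contract e v₁ v₂).ends f)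
      = insert v₁ (G.verts.filter fun v => ∀ f ∈ insert e B, v ∉ G.ends f) := by
  have hv₁mem : ∀ f ∈ B, v₁ ∉ (G.contract e v₁ v₂).ends f := by
    intro f hfB hmem
    rw [contract_ends] at hmem
    obtain ⟨w, hw, hqw⟩ := Sym2.mem_map.mp hmem
    unfold qmap at hqw
    split at hqw
    · next h => exact (hu f hfB).2 (h ▸ hw)
    · exact (hu f hfB).1 (hqw ▸ hw)
  ext v
  simp only [Finset.mem_filter, contract_verts, Finset.mem_insert, Finset.mem_erase]
  constructor
  · rintro ⟨hv, hiso⟩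
    by_cases hv1 : v = v₁
    · exact Or.inl hv1
    rcases hv with hv | ⟨hv2, hv⟩
    · exact absurd hv hv1
    refine Or.inr ⟨hv, fun f hf hmem => ?_⟩
    rcases hf with hfe | hfB
    · rcases mem_ends_e G e v₁ v₂ hends (hfe ▸ hmem) with h | h
      · exact hv1 h
      · exact hv2 h
    · refine hiso f hfB ?_
      rw [contract_ends]
      exact Sym2.mem_map.mpr ⟨v, hmem, qmap_eq_self _ _ hv2⟩
  · rintro (hv | ⟨hv, hiso⟩)
    · subst hv
      exact ⟨Or.inl rfl, hv₁mem⟩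
    · have hv1 : v ≠ v₁ := fun h =>
        hiso e (Or.inl rfl) (by rw [hends, h]; simp)
      have hv2 : v ≠ v₂ := fun h =>
        hiso e (Or.inl rfl) (by rw [hends, h]; simp)
      refine ⟨Or.inr ⟨hv2, hv⟩, fun f hfB hmem => ?_⟩
      rw [contract_ends] at hmem
      obtain ⟨w, hw, hqw⟩ := Sym2.mem_map.mp hmem
      unfold qmap at hqw
      split at hqw
      · exact hv1 hqw.symm
      · exact hiso f (Or.inr hfB) (hqw ▸ hw)

lemma v₁_not_mem_iso (hends : G.ends e = s(v₁, v₂)) (B : Finset β) :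
    v₁ ∉ (G.verts.filter fun v => ∀ f ∈ insert e B, v ∉ G.ends f) := by
  intro h
  rw [Finset.mem_filter] at h
  exact h.2 e (Finset.mem_insert_self _ _) (by rw [hends]; simp)

lemma nComp_touch (hends : G.ends e = s(v₁, v₂)) (B : Finset β)
    (ht : ∃ f ∈ B, v₁ ∈ G.ends f ∨ v₂ ∈ G.ends f) :
    G.nComp (insert e B) = (G.contract e v₁ v₂).nComp B := by
  unfold Multigraph.nComp
  rw [nCov_touch G e v₁ v₂ hends B ht, iso_touch G e v₁ v₂ hends B ht]

lemma nComp_untouch (hends : G.ends e = s(v₁, v₂)) (B : Finset β)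
    (hu : ∀ f ∈ B, v₁ ∉ G.ends f ∧ v₂ ∉ G.ends f) :
    G.nComp (insert e B) = (G.contract e v₁ v₂).nComp B := by
  unfold Multigraph.nComp
  rw [nCov_untouch G e v₁ v₂ hends B hu, iso_untouch G e v₁ v₂ hends B hu,
    Finset.card_insert_of_notMem (v₁_not_mem_iso G e v₁ v₂ hends B)]
  omega

lemma contract_ends_eq_of_untouch (B : Finset β)
    (hu : ∀ f ∈ B, v₁ ∉ G.ends f ∧ v₂ ∉ G.ends f) :
    ∀ f ∈ B, (G.contract e v₁ v₂).ends f = G.ends f := by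
  intro f hfB
  rw [contract_ends]
  exact sym2_map_eq_self fun a ha =>
    qmap_eq_self _ _ (fun h => (hu f hfB).2 (h ▸ ha))

lemma nCov_extract (B : Finset β)
    (hu : ∀ f ∈ B, v₁ ∉ G.ends f ∧ v₂ ∉ G.ends f) :
    (G.contract e v₁ v₂).nCov B = (G.extract v₁ v₂).nCov B :=
  nCov_congr _ _ B (fun f hfB => contract_ends_eq_of_untouch G e v₁ v₂ B hu f hfB)

lemma nComp_extract (B : Finset β)
    (hu : ∀ f ∈ B, v₁ ∉ G.ends f ∧ v₂ ∉ G.ends f) :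
    (G.contract e v₁ v₂).nComp B = (G.extract v₁ v₂).nComp B + 1 := by
  have hiso : ((G.contract e v₁ v₂).verts.filter
        fun v => ∀ f ∈ B, v ∉ (G.contract e v₁ v₂).ends f)
      = insert v₁ ((G.extract v₁ v₂).verts.filter
        fun v => ∀ f ∈ B, v ∉ (G.extract v₁ v₂).ends f) := by
    ext v
    simp only [Finset.mem_filter, contract_verts, extract_verts, Finset.mem_insert,
      Finset.mem_erase]
    constructor
    · rintro ⟨hv, hiso⟩
      by_cases hv1 : v = v₁
      · exact Or.inl hv1
      rcases hv with hv | ⟨hv2, hv⟩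
      · exact absurd hv hv1
      refine Or.inr ⟨⟨hv2, hv1, hv⟩, fun f hfB hmem => ?_⟩
      exact hiso f hfB ((contract_ends_eq_of_untouch G e v₁ v₂ B hu f hfB).symm ▸ hmem)
    · rintro (hv | ⟨⟨hv2, hv1, hv⟩, hiso⟩)
      · refine ⟨Or.inl hv, fun f hfB hmem => ?_⟩
        rw [contract_ends_eq_of_untouch G e v₁ v₂ B hu f hfB] at hmem
        exact (hu f hfB).1 (hv ▸ hmem)
      · refine ⟨Or.inr ⟨hv2, hv⟩, fun f hfB hmem => ?_⟩
        rw [contract_ends_eq_of_untouch G e v₁ v₂ B hu f hfB] at hmem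
        exact hiso f hfB hmem
  have hv1ne : v₁ ∉ ((G.extract v₁ v₂).verts.filter
      fun v => ∀ f ∈ B, v ∉ (G.extract v₁ v₂).ends f) := by
    intro h
    rw [Finset.mem_filter, extract_verts] at h
    exact (Finset.mem_erase.mp (Finset.mem_erase.mp h.1).2).1 rfl
  unfold Multigraph.nComp
  rw [nCov_extract G e v₁ v₂ B hu, hiso, Finset.card_insert_of_notMem hv1ne]
  omega

end Core

end CCPAux

/-- Let `G` be a finite (multi)graph and `e` an edge of `G` with
endpoints `v₁`, `v₂`.  Then the covered components polynomial satisfies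
`C(G,x,y,z) = C(G₋ₑ,x,y,z) + y·C(G/ₑ,x,y,z) + (xyz − xy)·C(G†ₑ,x,y,z)`. -/
theorem ccp_deletion_contraction_extraction {α β : Type} (G : Multigraph α β)
    (e : β) (he : e ∈ G.edges) (v₁ v₂ : α) (hends : G.ends e = s(v₁, v₂)) :
    G.ccp = (G.delete e).ccp + X 1 * (G.contract e v₁ v₂).ccp +
      (X 0 * X 1 * X 2 - X 0 * X 1) * (G.extract v₁ v₂).ccp := by
  classical
  have heE' : e ∉ G.edges.erase e := Finset.notMem_erase e _
  have hccp : G.ccp = ∑ A ∈ (G.edges.erase e).powerset,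
        (X 0 ^ G.nComp A * X 1 ^ A.card * X 2 ^ G.nCov A : MvPolynomial (Fin 3) ℤ)
      + ∑ B ∈ (G.edges.erase e).powerset,
        (X 0 ^ G.nComp (insert e B) * X 1 ^ (insert e B).card
          * X 2 ^ G.nCov (insert e B) : MvPolynomial (Fin 3) ℤ) := by
    unfold Multigraph.ccp
    rw [← Finset.insert_erase he, Finset.sum_powerset_insert heE', Finset.erase_insert heE']
  have hdel : (G.delete e).ccp = ∑ A ∈ (G.edges.erase e).powerset,
      (X 0 ^ G.nComp A * X 1 ^ A.card * X 2 ^ G.nCov A : MvPolynomial (Fin 3) ℤ) := rfl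
  have hcon : (G.contract e v₁ v₂).ccp = ∑ B ∈ (G.edges.erase e).powerset,
      (X 0 ^ (G.contract e v₁ v₂).nComp B * X 1 ^ B.card
        * X 2 ^ (G.contract e v₁ v₂).nCov B : MvPolynomial (Fin 3) ℤ) := rfl
  have hext : (G.extract v₁ v₂).ccp = ∑ B ∈ (G.extract v₁ v₂).edges.powerset,
      (X 0 ^ (G.extract v₁ v₂).nComp B * X 1 ^ B.card
        * X 2 ^ (G.extract v₁ v₂).nCov B : MvPolynomial (Fin 3) ℤ) := rfl
  have hterm : ∀ B ∈ (G.edges.erase e).powerset,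
      (X 0 ^ G.nComp (insert e B) * X 1 ^ (insert e B).card
        * X 2 ^ G.nCov (insert e B) : MvPolynomial (Fin 3) ℤ)
      = X 1 * (X 0 ^ (G.contract e v₁ v₂).nComp B * X 1 ^ B.card
            * X 2 ^ (G.contract e v₁ v₂).nCov B)
        + (if ∀ f ∈ B, v₁ ∉ G.ends f ∧ v₂ ∉ G.ends f then
            (X 1 * X 2 - X 1) * (X 0 ^ (G.contract e v₁ v₂).nComp B * X 1 ^ B.card
              * X 2 ^ (G.contract e v₁ v₂).nCov B)
          else 0) := by
    intro B hB
    have heB : e ∉ B := fun h => heE' (Finset.mem_powerset.mp hB h)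
    rw [Finset.card_insert_of_notMem heB]
    split_ifs with hu
    · rw [CCPAux.nComp_untouch G e v₁ v₂ hends B hu, CCPAux.nCov_untouch G e v₁ v₂ hends B hu]
      ring
    · have ht : ∃ f ∈ B, v₁ ∈ G.ends f ∨ v₂ ∈ G.ends f := by
        push_neg at hu
        obtain ⟨f, hf, himp⟩ := hu
        by_cases h1 : v₁ ∈ G.ends f
        · exact ⟨f, hf, Or.inl h1⟩
        · exact ⟨f, hf, Or.inr (himp h1)⟩
      rw [CCPAux.nComp_touch G e v₁ v₂ hends B ht, CCPAux.nCov_touch G e v₁ v₂ hends B ht]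
      ring
  have hpow : (G.edges.erase e).powerset.filter
        (fun B => ∀ f ∈ B, v₁ ∉ G.ends f ∧ v₂ ∉ G.ends f)
      = (G.extract v₁ v₂).edges.powerset := by
    have hexted : (G.extract v₁ v₂).edges
        = G.edges.filter (fun f => v₁ ∉ G.ends f ∧ v₂ ∉ G.ends f) := rfl
    ext B
    simp only [Finset.mem_filter, Finset.mem_powerset]
    constructor
    · rintro ⟨hBE, hP⟩ f hf
      rw [hexted, Finset.mem_filter]
      exact ⟨Finset.mem_of_mem_erase (hBE hf), hP f hf⟩
    · intro hBex
      have hmem : ∀ f ∈ B, f ∈ G.edges ∧ v₁ ∉ G.ends f ∧ v₂ ∉ G.ends f := by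
        intro f hf
        have := hBex hf
        rw [hexted, Finset.mem_filter] at this
        exact this
      refine ⟨fun f hf => Finset.mem_erase.mpr ⟨?_, (hmem f hf).1⟩, fun f hf => (hmem f hf).2⟩
      rintro rfl
      exact (hmem f hf).2.1 (by rw [hends]; simp)
  have hterm2 : ∀ B ∈ (G.extract v₁ v₂).edges.powerset,
      ((X 1 * X 2 - X 1) * (X 0 ^ (G.contract e v₁ v₂).nComp B * X 1 ^ B.card
          * X 2 ^ (G.contract e v₁ v₂).nCov B) : MvPolynomial (Fin 3) ℤ)
      = (X 0 * X 1 * X 2 - X 0 * X 1) * (X 0 ^ (G.extract v₁ v₂).nComp B * X 1 ^ B.card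
          * X 2 ^ (G.extract v₁ v₂).nCov B) := by
    intro B hB
    have hu : ∀ f ∈ B, v₁ ∉ G.ends f ∧ v₂ ∉ G.ends f := by
      intro f hf
      have := Finset.mem_powerset.mp hB hf
      rw [show (G.extract v₁ v₂).edges
        = G.edges.filter (fun f => v₁ ∉ G.ends f ∧ v₂ ∉ G.ends f) from rfl,
        Finset.mem_filter] at this
      exact this.2
    rw [CCPAux.nComp_extract G e v₁ v₂ B hu, CCPAux.nCov_extract G e v₁ v₂ B hu]
    ring
  rw [hccp, hdel, hcon, hext, Finset.sum_congr rfl hterm, Finset.sum_add_distrib,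
    ← Finset.mul_sum, ← Finset.sum_filter, hpow, Finset.sum_congr rfl hterm2,
    ← Finset.mul_sum]
  ring

end
end

section
/- Let G¹ and G² be finite graphs. Then the covered components polynomial is multiplicative over disjoint unions: C(G¹ ⊔ G², x, y, z) = C(G¹, x, y, z) · C(G², x, y, z), where G¹ ⊔ G² denotes the disjoint union of G¹ and G². Moreover C(K₁, x, y, z) = x for the one-vertex graph K₁. -/
open MvPolynomial Finset
open scoped Classical

noncomputable section

namespace CCPAux

open SimpleGraph

/-- Side-respecting reachability predicate on a sum of graphs. -/
def SideProp {α β : Type} (G : SimpleGraph α) (H : SimpleGraph β) :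
    α ⊕ β → α ⊕ β → Prop
  | Sum.inl a, Sum.inl b => G.Reachable a b
  | Sum.inr a, Sum.inr b => H.Reachable a b
  | _, _ => False

lemma walk_side {α β : Type} {G : SimpleGraph α} {H : SimpleGraph β} :
    ∀ {u v : α ⊕ β}, (G ⊕g H).Walk u v → SideProp G H u v := by
  intro u v w
  induction w with
  | nil =>
    rename_i x
    rcases x with a | a
    · exact Reachable.refl a
    · exact Reachable.refl a
  | cons h p ih =>
    rename_i q x z
    rcases q with a | a <;> rcases x with b | b <;>
      simp only [SimpleGraph.sum_adj] at h
    · rcases z with c | c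
      · exact (h.reachable).trans ih
      · exact ih
    · rcases z with c | c
      · exact ih
      · exact (h.reachable).trans ih

/-- Connected components of a disjoint sum of graphs. -/
def sumCompEquiv {α β : Type} (G : SimpleGraph α) (H : SimpleGraph β) :
    (G ⊕g H).ConnectedComponent ≃ G.ConnectedComponent ⊕ H.ConnectedComponent where
  toFun := ConnectedComponent.lift
    (Sum.elim (fun a => Sum.inl (G.connectedComponentMk a))
              (fun b => Sum.inr (H.connectedComponentMk b)))
    (by
      intro u v p _
      have hs := walk_side p
      rcases u with a | a <;> rcases v with b | b
      · exact congrArg Sum.inl (ConnectedComponent.sound hs)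
      · exact hs.elim
      · exact hs.elim
      · exact congrArg Sum.inr (ConnectedComponent.sound hs))
  invFun := Sum.elim (ConnectedComponent.map Embedding.sumInl.toHom)
                     (ConnectedComponent.map Embedding.sumInr.toHom)
  left_inv := by
    apply ConnectedComponent.ind
    rintro (a | a) <;> rfl
  right_inv := by
    rintro (c | c)
    · exact ConnectedComponent.ind (fun v => rfl) c
    · exact ConnectedComponent.ind (fun v => rfl) c

@[simp] lemma sumCompEquiv_mk_inl {α β : Type} (G : SimpleGraph α) (H : SimpleGraph β) (a : α) :
    sumCompEquiv G H ((G ⊕g H).connectedComponentMk (Sum.inl a))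
      = Sum.inl (G.connectedComponentMk a) := rfl

@[simp] lemma sumCompEquiv_mk_inr {α β : Type} (G : SimpleGraph α) (H : SimpleGraph β) (b : β) :
    sumCompEquiv G H ((G ⊕g H).connectedComponentMk (Sum.inr b))
      = Sum.inr (H.connectedComponentMk b) := rfl


variable {α β α' β' : Type}

open Multigraph in
lemma disjUnion_sg_adj (G : Multigraph α β) (H : Multigraph α' β')
    (A₁ : Finset β) (A₂ : Finset β') (u v : α ⊕ α') :
    ((G.disjUnion H).sg (A₁.disjSum A₂)).Adj u v ↔
      ((G.sg A₁) ⊕g (H.sg A₂)).Adj u v := by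
  have hmemL : ∀ (x y : α),
      (∃ f ∈ A₁.disjSum A₂, (G.disjUnion H).ends f = s(Sum.inl x, Sum.inl y))
      ↔ ∃ f ∈ A₁, G.ends f = s(x, y) := by
    intro x y
    constructor
    · rintro ⟨(f | f), hf, hend⟩
      · simp only [Multigraph.disjUnion, Sum.elim_inl] at hend
        refine ⟨f, Finset.inl_mem_disjSum.mp hf, ?_⟩
        apply Sym2.map.injective Sum.inl_injective
        rw [hend, Sym2.map_pair_eq]
      · simp only [Multigraph.disjUnion, Sum.elim_inr] at hend
        exfalso
        have hm : (Sum.inl x : α ⊕ α') ∈ Sym2.map Sum.inr (H.ends f) := by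
          rw [hend]; exact Sym2.mem_mk_left _ _
        obtain ⟨w, -, hw⟩ := Sym2.mem_map.mp hm
        exact nomatch hw
    · rintro ⟨f, hf, hend⟩
      exact ⟨Sum.inl f, Finset.inl_mem_disjSum.mpr hf, by
        simp [Multigraph.disjUnion, hend, Sym2.map_pair_eq]⟩
  have hmemR : ∀ (x y : α'),
      (∃ f ∈ A₁.disjSum A₂, (G.disjUnion H).ends f = s(Sum.inr x, Sum.inr y))
      ↔ ∃ f ∈ A₂, H.ends f = s(x, y) := by
    intro x y
    constructor
    · rintro ⟨(f | f), hf, hend⟩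
      · simp only [Multigraph.disjUnion, Sum.elim_inl] at hend
        exfalso
        have hm : (Sum.inr x : α ⊕ α') ∈ Sym2.map Sum.inl (G.ends f) := by
          rw [hend]; exact Sym2.mem_mk_left _ _
        obtain ⟨w, -, hw⟩ := Sym2.mem_map.mp hm
        exact nomatch hw
      · simp only [Multigraph.disjUnion, Sum.elim_inr] at hend
        refine ⟨f, Finset.inr_mem_disjSum.mp hf, ?_⟩
        apply Sym2.map.injective Sum.inr_injective
        rw [hend, Sym2.map_pair_eq]
    · rintro ⟨f, hf, hend⟩
      exact ⟨Sum.inr f, Finset.inr_mem_disjSum.mpr hf, by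
        simp [Multigraph.disjUnion, hend, Sym2.map_pair_eq]⟩
  have hcross : ∀ (x : α) (y : α'),
      ¬ ∃ f ∈ A₁.disjSum A₂, (G.disjUnion H).ends f = s(Sum.inl x, Sum.inr y) := by
    rintro x y ⟨(f | f), hf, hend⟩
    · simp only [Multigraph.disjUnion, Sum.elim_inl] at hend
      have hm : (Sum.inr y : α ⊕ α') ∈ Sym2.map Sum.inl (G.ends f) := by
        rw [hend]; exact Sym2.mem_mk_right _ _
      obtain ⟨w, -, hw⟩ := Sym2.mem_map.mp hm
      exact nomatch hw
    · simp only [Multigraph.disjUnion, Sum.elim_inr] at hend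
      have hm : (Sum.inl x : α ⊕ α') ∈ Sym2.map Sum.inr (H.ends f) := by
        rw [hend]; exact Sym2.mem_mk_left _ _
      obtain ⟨w, -, hw⟩ := Sym2.mem_map.mp hm
      exact nomatch hw
  rcases u with a | a <;> rcases v with b | b <;>
    simp only [Multigraph.sg, SimpleGraph.fromEdgeSet_adj, Set.mem_setOf_eq,
      SimpleGraph.sum_adj]
  · rw [hmemL a b]
    simp [Sum.inl_injective.ne_iff]
  · simp [hcross a b]
  · constructor
    · rintro ⟨hex, -⟩
      exact absurd (by
        obtain ⟨f, hf, hend⟩ := hex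
        exact ⟨f, hf, by rw [hend, Sym2.eq_swap]⟩) (hcross b a)
    · exact fun h => h.elim
  · rw [hmemR a b]
    simp [Sum.inr_injective.ne_iff]

open Multigraph in
lemma covFinite (G : Multigraph α β) (A : Finset β) (hA : A ⊆ G.edges) :
    Finite {c : (G.sg A).ConnectedComponent // G.covered A c} := by
  have hch : ∀ c : {c : (G.sg A).ConnectedComponent // G.covered A c},
      ∃ v : α, v ∈ G.verts ∧ (G.sg A).connectedComponentMk v = c.1 := by
    rintro ⟨c, f, hf, v, hv, hc⟩
    exact ⟨v, G.ends_mem f (hA hf) v hv, hc⟩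
  choose g hg1 hg2 using hch
  refine Finite.of_injective (fun c => (⟨g c, hg1 c⟩ : {v // v ∈ G.verts})) ?_
  intro c c' h
  apply Subtype.ext
  have hgg : g c = g c' := congrArg Subtype.val h
  rw [← hg2 c, ← hg2 c', hgg]

open Multigraph in
lemma nCov_disjSum (G : Multigraph α β) (H : Multigraph α' β')
    (A₁ : Finset β) (A₂ : Finset β') (h₁ : A₁ ⊆ G.edges) (h₂ : A₂ ⊆ H.edges) :
    (G.disjUnion H).nCov (A₁.disjSum A₂) = G.nCov A₁ + H.nCov A₂ := by
  haveI := covFinite G A₁ h₁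
  haveI := covFinite H A₂ h₂
  let iso : (G.disjUnion H).sg (A₁.disjSum A₂) ≃g ((G.sg A₁) ⊕g (H.sg A₂)) :=
    { toEquiv := Equiv.refl _,
      map_rel_iff' := fun {u v} => (disjUnion_sg_adj G H A₁ A₂ u v).symm }
  let e := iso.connectedComponentEquiv.trans (sumCompEquiv (G.sg A₁) (H.sg A₂))
  have hmkl : ∀ a : α,
      e (((G.disjUnion H).sg (A₁.disjSum A₂)).connectedComponentMk (Sum.inl a))
        = Sum.inl ((G.sg A₁).connectedComponentMk a) := fun a => rfl
  have hmkr : ∀ a : α',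
      e (((G.disjUnion H).sg (A₁.disjSum A₂)).connectedComponentMk (Sum.inr a))
        = Sum.inr ((H.sg A₂).connectedComponentMk a) := fun a => rfl
  have hcov : ∀ c, (G.disjUnion H).covered (A₁.disjSum A₂) c ↔
      Sum.elim (G.covered A₁) (H.covered A₂) (e c) := by
    intro c
    constructor
    · rintro ⟨(f | f), hf, v, hv, rfl⟩
      · simp only [Multigraph.disjUnion, Sum.elim_inl] at hv
        obtain ⟨w, hw, rfl⟩ := Sym2.mem_map.mp hv
        rw [hmkl w]
        exact ⟨f, Finset.inl_mem_disjSum.mp hf, w, hw, rfl⟩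
      · simp only [Multigraph.disjUnion, Sum.elim_inr] at hv
        obtain ⟨w, hw, rfl⟩ := Sym2.mem_map.mp hv
        rw [hmkr w]
        exact ⟨f, Finset.inr_mem_disjSum.mp hf, w, hw, rfl⟩
    · intro hc
      rcases hec : e c with c₁ | c₂
      · rw [hec] at hc
        obtain ⟨f, hf, w, hw, hmk⟩ := hc
        refine ⟨Sum.inl f, Finset.inl_mem_disjSum.mpr hf, Sum.inl w, ?_, ?_⟩
        · show Sum.inl w ∈ (G.disjUnion H).ends (Sum.inl f)
          simp only [Multigraph.disjUnion, Sum.elim_inl]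
          exact Sym2.mem_map.mpr ⟨w, hw, rfl⟩
        · apply e.injective
          rw [hmkl w, hec, hmk]
      · rw [hec] at hc
        obtain ⟨f, hf, w, hw, hmk⟩ := hc
        refine ⟨Sum.inr f, Finset.inr_mem_disjSum.mpr hf, Sum.inr w, ?_, ?_⟩
        · show Sum.inr w ∈ (G.disjUnion H).ends (Sum.inr f)
          simp only [Multigraph.disjUnion, Sum.elim_inr]
          exact Sym2.mem_map.mpr ⟨w, hw, rfl⟩
        · apply e.injective
          rw [hmkr w, hec, hmk]
  have key : {c // (G.disjUnion H).covered (A₁.disjSum A₂) c} ≃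
      ({c // G.covered A₁ c} ⊕ {c // H.covered A₂ c}) :=
    (Equiv.subtypeEquiv e hcov).trans Equiv.subtypeSum
  show Nat.card _ = Nat.card _ + Nat.card _
  rw [Nat.card_congr key, Nat.card_sum]

open Multigraph in
lemma nComp_disjSum (G : Multigraph α β) (H : Multigraph α' β')
    (A₁ : Finset β) (A₂ : Finset β') (h₁ : A₁ ⊆ G.edges) (h₂ : A₂ ⊆ H.edges) :
    (G.disjUnion H).nComp (A₁.disjSum A₂) = G.nComp A₁ + H.nComp A₂ := by
  unfold Multigraph.nComp
  rw [nCov_disjSum G H A₁ A₂ h₁ h₂, add_add_add_comm, ← Finset.card_disjSum]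
  congr 1
  congr 1
  ext x
  rcases x with v | v <;>
    simp [Multigraph.disjUnion, Finset.mem_filter, Sum.forall, Sym2.mem_map]
  · exact fun _ => ⟨fun h f hf hv => h f hf v hv rfl,
      fun h f hf x hx hxv => h f hf (hxv ▸ hx)⟩
  · exact fun _ => ⟨fun h f hf hv => h f hf v hv rfl,
      fun h f hf x hx hxv => h f hf (hxv ▸ hx)⟩

end CCPAux



/-- The covered components polynomial is multiplicative over disjoint
unions, `C(G¹ ⊔ G², x, y, z) = C(G¹, x, y, z) · C(G², x, y, z)`, and
`C(K₁, x, y, z) = x` for the one-vertex graph `K₁`. -/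
theorem ccp_disjUnion_mul_and_K1 :
    (∀ {α β α' β' : Type} (G : Multigraph α β) (H : Multigraph α' β'),
      (G.disjUnion H).ccp = G.ccp * H.ccp) ∧
    Multigraph.K1.ccp = X 0 := by
  constructor
  · intro α β α' β' G H
    unfold Multigraph.ccp
    have hE : (G.disjUnion H).edges = G.edges.disjSum H.edges := rfl
    rw [hE, Finset.sum_mul_sum]
    rw [Finset.sum_nbij' (i := fun (A : Finset (β ⊕ β')) => (A.toLeft, A.toRight))
      (j := fun p : Finset β × Finset β' => p.1.disjSum p.2)
      (t := G.edges.powerset ×ˢ H.edges.powerset)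
      (g := fun p => X 0 ^ (G.disjUnion H).nComp (p.1.disjSum p.2) *
        X 1 ^ (p.1.disjSum p.2).card * X 2 ^ (G.disjUnion H).nCov (p.1.disjSum p.2))
      (hi := ?_) (hj := ?_) (left_neg := ?_) (right_neg := ?_) (h := ?_)]
    · rw [Finset.sum_product]
      refine Finset.sum_congr rfl fun A₁ hA₁ => ?_
      refine Finset.sum_congr rfl fun A₂ hA₂ => ?_
      rw [Finset.mem_powerset] at hA₁ hA₂
      rw [CCPAux.nComp_disjSum G H A₁ A₂ hA₁ hA₂, CCPAux.nCov_disjSum G H A₁ A₂ hA₁ hA₂,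
        Finset.card_disjSum, pow_add, pow_add, pow_add]
      ring
    · intro A hA
      rw [Finset.mem_powerset] at hA
      rw [Finset.mem_product, Finset.mem_powerset, Finset.mem_powerset]
      constructor
      · intro x hx
        have := hA (Finset.mem_toLeft.mp hx)
        exact Finset.inl_mem_disjSum.mp this
      · intro x hx
        have := hA (Finset.mem_toRight.mp hx)
        exact Finset.inr_mem_disjSum.mp this
    · intro p hp
      rw [Finset.mem_product, Finset.mem_powerset, Finset.mem_powerset] at hp
      rw [Finset.mem_powerset]
      intro x hx
      rcases x with x | x
      · exact Finset.inl_mem_disjSum.mpr (hp.1 (Finset.inl_mem_disjSum.mp hx))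
      · exact Finset.inr_mem_disjSum.mpr (hp.2 (Finset.inr_mem_disjSum.mp hx))
    · intro A hA
      exact Finset.toLeft_disjSum_toRight
    · intro p hp
      simp
    · intro A hA
      simp only [Finset.toLeft_disjSum_toRight]
  · unfold Multigraph.ccp
    have hE : Multigraph.K1.edges = (∅ : Finset Empty) := rfl
    rw [hE, Finset.powerset_empty, Finset.sum_singleton]
    have h1 : Multigraph.K1.nCov ∅ = 0 := by
      haveI : IsEmpty {c : (Multigraph.K1.sg ∅).ConnectedComponent //
          Multigraph.K1.covered ∅ c} :=
        ⟨fun c => by obtain ⟨f, hf, -⟩ := c.2; exact f.elim⟩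
      simp [Multigraph.nCov]
    have h2 : Multigraph.K1.nComp ∅ = 1 := by
      unfold Multigraph.nComp
      rw [h1]
      simp [Multigraph.K1]
    rw [h1, h2]
    simp

end
end

section
/- Let G = (V,E) be a finite graph. Then ∑_{(A⊔B)⊆E} x^{k(⟨A∪B⟩)} y^{|A|+|B|} (z−1)^{c(⟨B⟩)} = C(G,x,y,z) = ∑_{F⊆E} x^{k(⟨F⟩)} y^{|F|} z^{c(⟨F⟩)}, where the left sum is over all ordered pairs (A,B) of edge subsets of E such that the set of vertices incident to edges of A is disjoint from the set of vertices incident to edges of B. (Equivalently, the covered components polynomial equals the edge elimination polynomial ξ(G,x,y,z) evaluated at z ↦ xyz − xy.) -/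
open MvPolynomial Finset
open scoped Classical

noncomputable section

namespace Multigraph

variable {α β : Type}

lemma exists_mem_sym2 (s : Sym2 α) : ∃ v, v ∈ s :=
  Sym2.ind (fun a b => ⟨a, Sym2.mem_mk_left a b⟩) s

lemma sg_adj (G : Multigraph α β) (A : Finset β) (v w : α) :
    (G.sg A).Adj v w ↔ (∃ f ∈ A, G.ends f = s(v, w)) ∧ v ≠ w := by
  rw [Multigraph.sg, SimpleGraph.fromEdgeSet_adj]
  rfl

lemma sg_mono (G : Multigraph α β) {A B : Finset β} (h : A ⊆ B) : G.sg A ≤ G.sg B :=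
  SimpleGraph.fromEdgeSet_mono (fun s hs => by
    obtain ⟨f, hf, he⟩ := hs; exact ⟨f, h hf, he⟩)

lemma reachable_of_mem_ends (G : Multigraph α β) {F : Finset β} {f : β} (hf : f ∈ F) {v w : α}
    (hv : v ∈ G.ends f) (hw : w ∈ G.ends f) : (G.sg F).Reachable v w := by
  rcases eq_or_ne v w with rfl | hne
  · exact SimpleGraph.Reachable.refl v
  · exact SimpleGraph.Adj.reachable ((G.sg_adj F v w).mpr
      ⟨⟨f, hf, (Sym2.mem_and_mem_iff hne).mp ⟨hv, hw⟩⟩, hne⟩)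

lemma touched_walk (G : Multigraph α β) {F B : Finset β}
    (hcl : ∀ f ∈ F \ B, ∀ g ∈ B, ∀ w : α, ¬(w ∈ G.ends f ∧ w ∈ G.ends g)) :
    ∀ {v w : α}, (G.sg F).Walk v w → (∃ g ∈ B, v ∈ G.ends g) →
      (∃ g ∈ B, w ∈ G.ends g) ∧ (G.sg B).Reachable v w := by
  intro v w p
  induction p with
  | nil => exact fun hv => ⟨hv, SimpleGraph.Reachable.refl _⟩
  | @cons a b c h p ih =>
    intro hv
    obtain ⟨g, hg, hvg⟩ := hv
    rw [G.sg_adj F a b] at h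
    obtain ⟨⟨f, hfF, hf⟩, hne⟩ := h
    have hfB : f ∈ B := by
      by_contra hfb
      exact hcl f (Finset.mem_sdiff.mpr ⟨hfF, hfb⟩) g hg a
        ⟨by rw [hf]; exact Sym2.mem_mk_left a b, hvg⟩
    have hb : ∃ g ∈ B, b ∈ G.ends g := ⟨f, hfB, by rw [hf]; exact Sym2.mem_mk_right a b⟩
    obtain ⟨hw, hr⟩ := ih hb
    exact ⟨hw, (SimpleGraph.Adj.reachable ((G.sg_adj B a b).mpr ⟨⟨f, hfB, hf⟩, hne⟩)).trans hr⟩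

lemma nCov_eq_card (G : Multigraph α β) {F B : Finset β} (hF : F ⊆ G.edges) (hBF : B ⊆ F)
    (hcl : ∀ f ∈ F \ B, ∀ g ∈ B, ∀ w : α, ¬(w ∈ G.ends f ∧ w ∈ G.ends g)) :
    G.nCov B = ((G.verts.filter (fun v => ∃ f ∈ B, v ∈ G.ends f)).image
      (G.sg F).connectedComponentMk).card := by
  classical
  set Ψ := (G.verts.filter (fun v => ∃ f ∈ B, v ∈ G.ends f)).image
      (G.sg F).connectedComponentMk with hΨ
  set μ : (G.sg B).ConnectedComponent → (G.sg F).ConnectedComponent :=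
    SimpleGraph.ConnectedComponent.map (SimpleGraph.Hom.ofLE (G.sg_mono hBF)) with hμ
  have hμmk : ∀ v : α, μ ((G.sg B).connectedComponentMk v) = (G.sg F).connectedComponentMk v :=
    fun v => SimpleGraph.ConnectedComponent.map_mk _ v
  have key : ∀ c : (G.sg B).ConnectedComponent, G.covered B c → μ c ∈ Ψ := by
    rintro c ⟨f, hf, v, hvf, rfl⟩
    rw [hμmk]
    exact Finset.mem_image_of_mem _ (Finset.mem_filter.mpr
      ⟨G.ends_mem f (hF (hBF hf)) v hvf, f, hf, hvf⟩)
  let ψ : {c // G.covered B c} → {x // x ∈ Ψ} := fun c => ⟨μ c.1, key c.1 c.2⟩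
  have hinj : Function.Injective ψ := by
    rintro ⟨c₁, h₁⟩ ⟨c₂, h₂⟩ h
    obtain ⟨f₁, hf₁, v₁, hv₁, rfl⟩ := h₁
    obtain ⟨f₂, hf₂, v₂, hv₂, rfl⟩ := h₂
    simp only [ψ, Subtype.mk.injEq, hμmk] at h ⊢
    obtain ⟨p⟩ := SimpleGraph.ConnectedComponent.eq.mp h
    exact Subtype.ext (SimpleGraph.ConnectedComponent.eq.mpr
      ((G.touched_walk hcl p ⟨f₁, hf₁, hv₁⟩).2))
  have hsurj : Function.Surjective ψ := by
    rintro ⟨x, hx⟩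
    obtain ⟨v, hv, rfl⟩ := Finset.mem_image.mp hx
    obtain ⟨-, f, hf, hvf⟩ := Finset.mem_filter.mp hv
    exact ⟨⟨(G.sg B).connectedComponentMk v, ⟨f, hf, v, hvf, rfl⟩⟩,
      by simp only [ψ, Subtype.mk.injEq, hμmk]⟩
  rw [Multigraph.nCov, Nat.card_congr (Equiv.ofBijective ψ ⟨hinj, hsurj⟩),
    Nat.card_eq_finsetCard]

lemma sum_powerset_pow {γ : Type} {R : Type*} [CommRing R] (T : Finset γ) (x : R) :
    ∑ S ∈ T.powerset, x ^ S.card = (x + 1) ^ T.card := by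
  classical
  calc ∑ S ∈ T.powerset, x ^ S.card
      = ∑ S ∈ T.powerset, (∏ _i ∈ S, x) * ∏ _i ∈ T \ S, (1 : R) := by
        simp [Finset.prod_const]
    _ = ∏ _i ∈ T, (x + 1) := (Finset.prod_add _ _ T).symm
    _ = (x + 1) ^ T.card := by simp [Finset.prod_const]

lemma sum_inner (G : Multigraph α β) {F : Finset β} (hF : F ⊆ G.edges) :
    ∑ B ∈ F.powerset.filter
        (fun B => ∀ f ∈ F \ B, ∀ g ∈ B, ∀ w : α, ¬(w ∈ G.ends f ∧ w ∈ G.ends g)),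
      ((X 2 : MvPolynomial (Fin 3) ℤ) - 1) ^ G.nCov B
      = (X 2 : MvPolynomial (Fin 3) ℤ) ^ G.nCov F := by
  classical
  set TF := (G.verts.filter (fun v => ∃ f ∈ F, v ∈ G.ends f)).image
    (G.sg F).connectedComponentMk with hTF
  have hclF : ∀ f ∈ F \ F, ∀ g ∈ F, ∀ w : α, ¬(w ∈ G.ends f ∧ w ∈ G.ends g) := by simp
  have hcard : G.nCov F = TF.card := G.nCov_eq_card hF (Finset.Subset.refl F) hclF
  have h1 : (X 2 : MvPolynomial (Fin 3) ℤ) ^ TF.card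
      = ∑ S ∈ TF.powerset, ((X 2 : MvPolynomial (Fin 3) ℤ) - 1) ^ S.card := by
    rw [sum_powerset_pow]
    congr 1
    ring
  rw [hcard, h1]
  refine Finset.sum_bij'
    (i := fun B _ => (G.verts.filter (fun v => ∃ f ∈ B, v ∈ G.ends f)).image
      (G.sg F).connectedComponentMk)
    (j := fun S _ => F.filter (fun f => ∃ v, v ∈ G.ends f ∧ (G.sg F).connectedComponentMk v ∈ S))
    ?_ ?_ ?_ ?_ ?_
  · intro B hB
    obtain ⟨hBF, -⟩ := Finset.mem_filter.mp hB
    rw [Finset.mem_powerset] at hBF ⊢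
    intro c hc
    obtain ⟨v, hv, rfl⟩ := Finset.mem_image.mp hc
    obtain ⟨hvV, f, hf, hvf⟩ := Finset.mem_filter.mp hv
    exact Finset.mem_image_of_mem _ (Finset.mem_filter.mpr ⟨hvV, f, hBF hf, hvf⟩)
  · intro S hS
    rw [Finset.mem_filter, Finset.mem_powerset]
    refine ⟨Finset.filter_subset _ _, ?_⟩
    rintro f hf g hg w ⟨hwf, hwg⟩
    obtain ⟨hfF, hfn⟩ := Finset.mem_sdiff.mp hf
    obtain ⟨hgF, v, hvg, hvS⟩ := Finset.mem_filter.mp hg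
    apply hfn
    refine Finset.mem_filter.mpr ⟨hfF, w, hwf, ?_⟩
    have hwv : (G.sg F).connectedComponentMk w = (G.sg F).connectedComponentMk v :=
      SimpleGraph.ConnectedComponent.eq.mpr (G.reachable_of_mem_ends hgF hwg hvg)
    rwa [hwv]
  · intro B hB
    obtain ⟨hBF, hcl⟩ := Finset.mem_filter.mp hB
    rw [Finset.mem_powerset] at hBF
    ext f
    simp only [Finset.mem_filter]
    constructor
    · rintro ⟨hfF, v, hvf, hvi⟩
      obtain ⟨u, hu, hmk⟩ := Finset.mem_image.mp hvi
      obtain ⟨-, g, hg, hug⟩ := Finset.mem_filter.mp hu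
      obtain ⟨p⟩ := SimpleGraph.ConnectedComponent.eq.mp hmk
      obtain ⟨⟨g', hg', hvg'⟩, -⟩ := G.touched_walk hcl p ⟨g, hg, hug⟩
      by_contra hfB
      exact hcl f (Finset.mem_sdiff.mpr ⟨hfF, hfB⟩) g' hg' v ⟨hvf, hvg'⟩
    · intro hfB
      obtain ⟨v, hvf⟩ := exists_mem_sym2 (G.ends f)
      exact ⟨hBF hfB, v, hvf, Finset.mem_image_of_mem _ (Finset.mem_filter.mpr
        ⟨G.ends_mem f (hF (hBF hfB)) v hvf, f, hfB, hvf⟩)⟩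
  · intro S hS
    rw [Finset.mem_powerset] at hS
    ext c
    constructor
    · intro hc
      obtain ⟨v, hv, rfl⟩ := Finset.mem_image.mp hc
      obtain ⟨-, f, hf, hvf⟩ := Finset.mem_filter.mp hv
      obtain ⟨hfF, u, huf, huS⟩ := Finset.mem_filter.mp hf
      have hvu : (G.sg F).connectedComponentMk v = (G.sg F).connectedComponentMk u :=
        SimpleGraph.ConnectedComponent.eq.mpr (G.reachable_of_mem_ends hfF hvf huf)
      rwa [hvu]
    · intro hc
      obtain ⟨v, hv, rfl⟩ := Finset.mem_image.mp (hS hc)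
      obtain ⟨hvV, f, hf, hvf⟩ := Finset.mem_filter.mp hv
      exact Finset.mem_image_of_mem _ (Finset.mem_filter.mpr
        ⟨hvV, f, Finset.mem_filter.mpr ⟨hf, v, hvf, hc⟩, hvf⟩)
  · intro B hB
    obtain ⟨hBF, hcl⟩ := Finset.mem_filter.mp hB
    rw [G.nCov_eq_card hF (Finset.mem_powerset.mp hBF) hcl]

end Multigraph

/-- For a finite (multi)graph `G`,
`∑_{(A⊔B)⊆E} x^{k(⟨A∪B⟩)} y^{|A|+|B|} (z−1)^{c(⟨B⟩)} = C(G,x,y,z)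
  = ∑_{F⊆E} x^{k(⟨F⟩)} y^{|F|} z^{c(⟨F⟩)}`,
where the first sum is over ordered pairs `(A,B)` of edge subsets such that the set of
vertices incident to edges of `A` is disjoint from the set of vertices incident to edges
of `B`.  (Equivalently, `C` is the edge elimination polynomial `ξ` at `z ↦ xyz − xy`.) -/
theorem ccp_pair_expansion {α β : Type} (G : Multigraph α β) :
    (∑ p ∈ (G.edges.powerset ×ˢ G.edges.powerset).filter
        (fun p => ∀ f ∈ p.1, ∀ g ∈ p.2, ∀ w : α, ¬(w ∈ G.ends f ∧ w ∈ G.ends g)),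
      X 0 ^ G.nComp (p.1 ∪ p.2) * X 1 ^ (p.1.card + p.2.card) * (X 2 - 1) ^ G.nCov p.2)
      = G.ccp ∧
    G.ccp = ∑ F ∈ G.edges.powerset, X 0 ^ G.nComp F * X 1 ^ F.card * X 2 ^ G.nCov F := by
  classical
  refine ⟨?_, rfl⟩
  have hdisj : ∀ {A B : Finset β},
      (∀ f ∈ A, ∀ g ∈ B, ∀ w : α, ¬(w ∈ G.ends f ∧ w ∈ G.ends g)) → Disjoint A B := by
    intro A B h
    rw [Finset.disjoint_left]
    intro f hfA hfB
    obtain ⟨v, hv⟩ := Multigraph.exists_mem_sym2 (G.ends f)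
    exact h f hfA f hfB v ⟨hv, hv⟩
  have step : (∑ p ∈ (G.edges.powerset ×ˢ G.edges.powerset).filter
        (fun p => ∀ f ∈ p.1, ∀ g ∈ p.2, ∀ w : α, ¬(w ∈ G.ends f ∧ w ∈ G.ends g)),
      X 0 ^ G.nComp (p.1 ∪ p.2) * X 1 ^ (p.1.card + p.2.card) * (X 2 - 1) ^ G.nCov p.2)
      = ∑ q ∈ G.edges.powerset.sigma (fun F => F.powerset.filter
          (fun B => ∀ f ∈ F \ B, ∀ g ∈ B, ∀ w : α, ¬(w ∈ G.ends f ∧ w ∈ G.ends g))),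
        (X 0 : MvPolynomial (Fin 3) ℤ) ^ G.nComp q.1 * X 1 ^ q.1.card
          * (X 2 - 1) ^ G.nCov q.2 := by
    refine Finset.sum_bij' (i := fun p _ => ⟨p.1 ∪ p.2, p.2⟩)
      (j := fun q _ => (q.1 \ q.2, q.2)) ?_ ?_ ?_ ?_ ?_
    · intro p hp
      obtain ⟨hmem, hcond⟩ := Finset.mem_filter.mp hp
      obtain ⟨hA, hB⟩ := Finset.mem_product.mp hmem
      rw [Finset.mem_powerset] at hA hB
      refine Finset.mem_sigma.mpr ⟨Finset.mem_powerset.mpr (Finset.union_subset hA hB), ?_⟩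
      refine Finset.mem_filter.mpr ⟨Finset.mem_powerset.mpr Finset.subset_union_right, ?_⟩
      intro f hf g hg w hw
      obtain ⟨hfU, hfn⟩ := Finset.mem_sdiff.mp hf
      rcases Finset.mem_union.mp hfU with hfA | hfB
      · exact hcond f hfA g hg w hw
      · exact hfn hfB
    · intro q hq
      obtain ⟨hF, hBmem⟩ := Finset.mem_sigma.mp hq
      obtain ⟨hBF, hcl⟩ := Finset.mem_filter.mp hBmem
      rw [Finset.mem_powerset] at hF hBF
      refine Finset.mem_filter.mpr ⟨Finset.mem_product.mpr
        ⟨Finset.mem_powerset.mpr (fun f hf => hF (Finset.mem_sdiff.mp hf).1),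
         Finset.mem_powerset.mpr (fun g hg => hF (hBF hg))⟩, ?_⟩
      exact hcl
    · rintro ⟨A, B⟩ hp
      obtain ⟨hmem, hcond⟩ := Finset.mem_filter.mp hp
      have hd : Disjoint A B := hdisj hcond
      show ((A ∪ B) \ B, B) = (A, B)
      rw [Finset.union_sdiff_right, Finset.sdiff_eq_self_of_disjoint hd]
    · rintro ⟨F, B⟩ hq
      obtain ⟨hF, hBmem⟩ := Finset.mem_sigma.mp hq
      obtain ⟨hBF, -⟩ := Finset.mem_filter.mp hBmem
      rw [Finset.mem_powerset] at hBF
      show (⟨F \ B ∪ B, B⟩ : (_ : Finset β) × Finset β) = ⟨F, B⟩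
      rw [Finset.sdiff_union_of_subset hBF]
    · rintro ⟨A, B⟩ hp
      obtain ⟨hmem, hcond⟩ := Finset.mem_filter.mp hp
      have hd : Disjoint A B := hdisj hcond
      show _ = (X 0 : MvPolynomial (Fin 3) ℤ) ^ G.nComp (A ∪ B) * X 1 ^ (A ∪ B).card
          * (X 2 - 1) ^ G.nCov B
      rw [Finset.card_union_of_disjoint hd]
  rw [step, Finset.sum_sigma, Multigraph.ccp]
  refine Finset.sum_congr rfl (fun F hF => ?_)
  dsimp only
  rw [← Finset.mul_sum, G.sum_inner (Finset.mem_powerset.mp hF)]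

end
end

section
/- Let G = (V,E) be a finite graph and e ∈ E a pendant edge of G, i.e., an edge at least one of whose incident vertices has degree 1. Then C(G,x,y,z) = (x + y)·C(G/ₑ,x,y,z) + (xyz − xy)·C(G†ₑ,x,y,z), where G/ₑ is G with e contracted and G†ₑ is G with e and both its incident vertices removed. -/
open MvPolynomial Finset
open scoped Classical

noncomputable section

namespace Multigraph

variable {α β : Type}

lemma sg_congr {G H : Multigraph α β} {A : Finset β}
    (h : ∀ f ∈ A, G.ends f = H.ends f) : G.sg A = H.sg A := by
  unfold sg
  congr 1
  ext s
  constructor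
  · rintro ⟨f, hf, rfl⟩; exact ⟨f, hf, (h f hf).symm⟩
  · rintro ⟨f, hf, rfl⟩; exact ⟨f, hf, h f hf⟩

lemma nCov_congr {G H : Multigraph α β} {A : Finset β}
    (h : ∀ f ∈ A, G.ends f = H.ends f) : G.nCov A = H.nCov A := by
  have hsg : G.sg A = H.sg A := sg_congr h
  unfold nCov covered
  rw [hsg]
  apply Nat.card_congr (Equiv.subtypeEquivRight ?_)
  intro c
  constructor
  · rintro ⟨f, hf, v, hv, rfl⟩; exact ⟨f, hf, v, (h f hf) ▸ hv, rfl⟩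
  · rintro ⟨f, hf, v, hv, rfl⟩; exact ⟨f, hf, v, (h f hf).symm ▸ hv, rfl⟩

lemma mk_eq_of_mem (G : Multigraph α β) (A : Finset β) {f : β} {v w : α}
    (hf : f ∈ A) (hv : v ∈ G.ends f) (hw : w ∈ G.ends f) :
    (G.sg A).connectedComponentMk v = (G.sg A).connectedComponentMk w := by
  obtain ⟨x, y, hs⟩ : ∃ x y, G.ends f = s(x, y) := by
    induction G.ends f using Sym2.inductionOn with
    | _ x y => exact ⟨x, y, rfl⟩
  rw [hs, Sym2.mem_iff] at hv hw
  by_cases hxy : x = y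
  · subst hxy
    have hvw : v = w := by rcases hv with rfl | rfl <;> rcases hw with rfl | rfl <;> rfl
    rw [hvw]
  · have hadj : (G.sg A).Adj x y :=
      (SimpleGraph.fromEdgeSet_adj _).mpr ⟨⟨f, hf, hs⟩, hxy⟩
    rcases hv with rfl | rfl <;> rcases hw with rfl | rfl
    · rfl
    · exact SimpleGraph.ConnectedComponent.connectedComponentMk_eq_of_adj hadj
    · exact SimpleGraph.ConnectedComponent.connectedComponentMk_eq_of_adj hadj.symm
    · rfl

lemma covered_finite (G : Multigraph α β) (A : Finset β) :
    Finite {c : (G.sg A).ConnectedComponent // G.covered A c} := by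
  classical
  refine Finite.of_injective
    (fun c => (⟨c.2.choose, c.2.choose_spec.1⟩ : {f // f ∈ A})) ?_
  rintro ⟨c, hc⟩ ⟨c', hc'⟩ hcc
  obtain ⟨v, hv, hvc⟩ := hc.choose_spec.2
  obtain ⟨v', hv', hvc'⟩ := hc'.choose_spec.2
  have hf : hc.choose = hc'.choose := congrArg Subtype.val hcc
  refine Subtype.ext ?_
  show c = c'
  rw [← hvc, ← hvc']
  exact mk_eq_of_mem G A hc.choose_spec.1 hv (hf ▸ hv')

end Multigraph

namespace Multigraph

section Pendant

variable {α β : Type} {G : Multigraph α β} {e : β} {v₁ v₂ : α} {A : Finset β}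

lemma sg_le_insert : G.sg A ≤ G.sg (insert e A) :=
  SimpleGraph.fromEdgeSet_mono
    (by rintro s ⟨f, hf, rfl⟩; exact ⟨f, Finset.mem_insert_of_mem hf, rfl⟩)

lemma not_adj_isolated {u : α} (hiso : ∀ f ∈ A, u ∉ G.ends f) (b : α) :
    ¬ (G.sg A).Adj u b := by
  intro h
  obtain ⟨⟨f, hf, hs⟩, -⟩ := (SimpleGraph.fromEdgeSet_adj _).mp h
  exact hiso f hf (by rw [hs]; exact Sym2.mem_iff.mpr (Or.inl rfl))

lemma mk_eq_self_of_isolated {u w : α} (hu : ∀ b, ¬ (G.sg A).Adj u b)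
    (h : (G.sg A).connectedComponentMk w = (G.sg A).connectedComponentMk u) : w = u := by
  obtain ⟨p⟩ := (SimpleGraph.ConnectedComponent.eq.mp h).symm
  cases p with
  | nil => rfl
  | cons h' _ => exact absurd h' (hu _)

lemma sg_adj_ne (hAv₁ : ∀ f ∈ A, v₁ ∉ G.ends f) {a b : α} (h : (G.sg A).Adj a b) :
    a ≠ v₁ := by
  rintro rfl
  exact not_adj_isolated hAv₁ b h

lemma adjT (hends : G.ends e = s(v₁, v₂)) (hne : v₁ ≠ v₂) :
    (G.sg (insert e A)).Adj v₁ v₂ :=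
  (SimpleGraph.fromEdgeSet_adj _).mpr ⟨⟨e, Finset.mem_insert_self e A, hends⟩, hne⟩

lemma adjT_cases (hends : G.ends e = s(v₁, v₂)) {a b : α}
    (h : (G.sg (insert e A)).Adj a b) :
    (G.sg A).Adj a b ∨ s(a, b) = s(v₁, v₂) := by
  obtain ⟨⟨f, hf, hs⟩, hab⟩ := (SimpleGraph.fromEdgeSet_adj _).mp h
  rcases Finset.mem_insert.mp hf with rfl | hfA
  · right; rw [← hs, hends]
  · left; exact (SimpleGraph.fromEdgeSet_adj _).mpr ⟨⟨f, hfA, hs⟩, hab⟩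

lemma reach_down (hends : G.ends e = s(v₁, v₂)) (hne : v₁ ≠ v₂)
    (hAv₁ : ∀ f ∈ A, v₁ ∉ G.ends f) {a b : α}
    (h : (G.sg (insert e A)).Reachable a b) :
    (G.sg A).Reachable (if a = v₁ then v₂ else a) (if b = v₁ then v₂ else b) := by
  obtain ⟨p⟩ := h
  induction p with
  | nil => exact SimpleGraph.Reachable.refl _
  | cons h' p ih =>
      rcases adjT_cases hends h' with hS | heq
      · have hu := sg_adj_ne hAv₁ hS
        have hx := sg_adj_ne hAv₁ hS.symm
        rw [if_neg hu]
        rw [if_neg hx] at ih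
        exact hS.reachable.trans ih
      · rcases Sym2.eq_iff.mp heq with ⟨rfl, rfl⟩ | ⟨rfl, rfl⟩
        · rw [if_pos rfl]
          rw [if_neg hne.symm] at ih
          exact ih
        · rw [if_neg hne.symm]
          rw [if_pos rfl] at ih
          exact ih

lemma reach_up (hends : G.ends e = s(v₁, v₂)) (hne : v₁ ≠ v₂) (a : α) :
    (G.sg (insert e A)).Reachable a (if a = v₁ then v₂ else a) := by
  by_cases h : a = v₁
  · subst h; rw [if_pos rfl]; exact (adjT hends hne).reachable
  · rw [if_neg h]

/-- The map on connected components induced by adding the pendant edge, downward. -/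
def pendantF (hends : G.ends e = s(v₁, v₂)) (hne : v₁ ≠ v₂)
    (hAv₁ : ∀ f ∈ A, v₁ ∉ G.ends f) :
    (G.sg (insert e A)).ConnectedComponent → (G.sg A).ConnectedComponent :=
  SimpleGraph.ConnectedComponent.lift
    (fun v => (G.sg A).connectedComponentMk (if v = v₁ then v₂ else v))
    (fun _ _ p _ => SimpleGraph.ConnectedComponent.sound (reach_down hends hne hAv₁ ⟨p⟩))

/-- The map on connected components induced by adding the pendant edge, upward. -/
def pendantG (G : Multigraph α β) (e : β) (A : Finset β) :
    (G.sg A).ConnectedComponent → (G.sg (insert e A)).ConnectedComponent :=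
  SimpleGraph.ConnectedComponent.lift
    (fun v => (G.sg (insert e A)).connectedComponentMk v)
    (fun _ _ p _ =>
      SimpleGraph.ConnectedComponent.sound (SimpleGraph.Reachable.mono sg_le_insert ⟨p⟩))

lemma pendantGF (hends : G.ends e = s(v₁, v₂)) (hne : v₁ ≠ v₂)
    (hAv₁ : ∀ f ∈ A, v₁ ∉ G.ends f) (c : (G.sg (insert e A)).ConnectedComponent) :
    pendantG G e A (pendantF hends hne hAv₁ c) = c := by
  induction c using SimpleGraph.ConnectedComponent.ind with
  | _ v =>
    show (G.sg (insert e A)).connectedComponentMk (if v = v₁ then v₂ else v)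
        = (G.sg (insert e A)).connectedComponentMk v
    exact (SimpleGraph.ConnectedComponent.sound (reach_up hends hne v)).symm

lemma pendantFG (hends : G.ends e = s(v₁, v₂)) (hne : v₁ ≠ v₂)
    (hAv₁ : ∀ f ∈ A, v₁ ∉ G.ends f) (c : (G.sg A).ConnectedComponent)
    (hc : G.covered A c) : pendantF hends hne hAv₁ (pendantG G e A c) = c := by
  obtain ⟨f, hf, v, hv, rfl⟩ := hc
  show (G.sg A).connectedComponentMk (if v = v₁ then v₂ else v)
      = (G.sg A).connectedComponentMk v
  rw [if_neg (fun h : v = v₁ => hAv₁ f hf (h ▸ hv))]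

lemma pendantG_covered (c : (G.sg A).ConnectedComponent) (hc : G.covered A c) :
    G.covered (insert e A) (pendantG G e A c) := by
  obtain ⟨f, hf, v, hv, rfl⟩ := hc
  exact ⟨f, Finset.mem_insert_of_mem hf, v, hv, rfl⟩

lemma pendantF_covered_of_ne (hends : G.ends e = s(v₁, v₂)) (hne : v₁ ≠ v₂)
    (hAv₁ : ∀ f ∈ A, v₁ ∉ G.ends f) (c : (G.sg (insert e A)).ConnectedComponent)
    (hc : G.covered (insert e A) c)
    (hcne : c ≠ (G.sg (insert e A)).connectedComponentMk v₁) :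
    G.covered A (pendantF hends hne hAv₁ c) := by
  obtain ⟨f, hf, v, hv, rfl⟩ := hc
  rcases Finset.mem_insert.mp hf with rfl | hfA
  · exfalso
    apply hcne
    rw [hends, Sym2.mem_iff] at hv
    rcases hv with rfl | rfl
    · rfl
    · exact SimpleGraph.ConnectedComponent.sound (adjT hends hne).symm.reachable
  · have hvne : v ≠ v₁ := fun h => hAv₁ f hfA (h ▸ hv)
    refine ⟨f, hfA, v, hv, ?_⟩
    show (G.sg A).connectedComponentMk v
        = (G.sg A).connectedComponentMk (if v = v₁ then v₂ else v)
    rw [if_neg hvne]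

lemma nCov_insert_of_covered (hends : G.ends e = s(v₁, v₂)) (hne : v₁ ≠ v₂)
    (hAv₁ : ∀ f ∈ A, v₁ ∉ G.ends f) (hcov : ∃ f ∈ A, v₂ ∈ G.ends f) :
    G.nCov (insert e A) = G.nCov A := by
  have covF : ∀ c, G.covered (insert e A) c → G.covered A (pendantF hends hne hAv₁ c) := by
    rintro c ⟨f, hf, v, hv, rfl⟩
    rcases Finset.mem_insert.mp hf with rfl | hfA
    · obtain ⟨f₀, hf₀, hv₂⟩ := hcov
      refine ⟨f₀, hf₀, v₂, hv₂, ?_⟩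
      show (G.sg A).connectedComponentMk v₂
          = (G.sg A).connectedComponentMk (if v = v₁ then v₂ else v)
      rw [hends, Sym2.mem_iff] at hv
      rcases hv with rfl | rfl
      · rw [if_pos rfl]
      · rw [if_neg hne.symm]
    · have hvne : v ≠ v₁ := fun h => hAv₁ f hfA (h ▸ hv)
      refine ⟨f, hfA, v, hv, ?_⟩
      show (G.sg A).connectedComponentMk v
          = (G.sg A).connectedComponentMk (if v = v₁ then v₂ else v)
      rw [if_neg hvne]
  exact Nat.card_congr
    ⟨fun c => ⟨pendantF hends hne hAv₁ c.1, covF c.1 c.2⟩,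
     fun c => ⟨pendantG G e A c.1, pendantG_covered c.1 c.2⟩,
     fun c => Subtype.ext (pendantGF hends hne hAv₁ c.1),
     fun c => Subtype.ext (pendantFG hends hne hAv₁ c.1 c.2)⟩

lemma nCov_insert_of_isolated (hends : G.ends e = s(v₁, v₂)) (hne : v₁ ≠ v₂)
    (hAv₁ : ∀ f ∈ A, v₁ ∉ G.ends f) (hd : ∀ f ∈ A, v₂ ∉ G.ends f) :
    G.nCov (insert e A) = G.nCov A + 1 := by
  classical
  have : Finite {c : (G.sg A).ConnectedComponent // G.covered A c} := covered_finite G A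
  have hv₁e : v₁ ∈ G.ends e := by rw [hends]; exact Sym2.mem_iff.mpr (Or.inl rfl)
  have hcovv₁ : G.covered (insert e A) ((G.sg (insert e A)).connectedComponentMk v₁) :=
    ⟨e, Finset.mem_insert_self e A, v₁, hv₁e, rfl⟩
  have hmk₂ : ∀ w, (G.sg A).connectedComponentMk w = (G.sg A).connectedComponentMk v₂ →
      w = v₂ := fun w h => mk_eq_self_of_isolated (not_adj_isolated hd) h
  have hGne : ∀ c, G.covered A c →
      pendantG G e A c ≠ (G.sg (insert e A)).connectedComponentMk v₁ := by
    rintro c ⟨f, hf, v, hv, rfl⟩ heq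
    have hvne : v ≠ v₁ := fun h => hAv₁ f hf (h ▸ hv)
    have h2 := congrArg (pendantF hends hne hAv₁) heq
    show False
    rw [show pendantF hends hne hAv₁
        (pendantG G e A ((G.sg A).connectedComponentMk v))
        = (G.sg A).connectedComponentMk (if v = v₁ then v₂ else v) from rfl] at h2
    rw [show pendantF hends hne hAv₁ ((G.sg (insert e A)).connectedComponentMk v₁)
        = (G.sg A).connectedComponentMk (if v₁ = v₁ then v₂ else v₁) from rfl] at h2
    rw [if_neg hvne, if_pos rfl] at h2
    exact hd f hf (hmk₂ v h2 ▸ hv)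
  have key : Nat.card {c // G.covered (insert e A) c}
      = Nat.card (Option {c : (G.sg A).ConnectedComponent // G.covered A c}) := by
    apply Nat.card_congr
    refine
      { toFun := fun c =>
          if h : c.1 = (G.sg (insert e A)).connectedComponentMk v₁ then none
          else some ⟨pendantF hends hne hAv₁ c.1,
            pendantF_covered_of_ne hends hne hAv₁ c.1 c.2 h⟩
        invFun := fun o =>
          o.elim ⟨(G.sg (insert e A)).connectedComponentMk v₁, hcovv₁⟩
            (fun c => ⟨pendantG G e A c.1, pendantG_covered c.1 c.2⟩)
        left_inv := ?_
        right_inv := ?_ }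
    · rintro ⟨c, hc⟩
      by_cases h : c = (G.sg (insert e A)).connectedComponentMk v₁
      · simp only [dif_pos h, Option.elim]
        exact Subtype.ext h.symm
      · simp only [dif_neg h, Option.elim]
        exact Subtype.ext (pendantGF hends hne hAv₁ c)
    · rintro (_ | ⟨c, hc⟩)
      · exact dif_pos rfl
      · simp only [Option.elim]
        refine (dif_neg (hGne c hc)).trans ?_
        exact congrArg some (Subtype.ext (pendantFG hends hne hAv₁ c hc))
  show Nat.card _ = Nat.card _ + 1
  rw [key, Finite.card_option]

end Pendant

end Multigraph

namespace Multigraph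

section Count

variable {α β : Type} {G : Multigraph α β} {e : β} {v₁ v₂ : α} {A : Finset β}

lemma iso_insert (hends : G.ends e = s(v₁, v₂)) :
    G.verts.filter (fun v => ∀ f ∈ insert e A, v ∉ G.ends f)
      = ((G.verts.filter (fun v => ∀ f ∈ A, v ∉ G.ends f)).erase v₁).erase v₂ := by
  classical
  ext v
  simp only [Finset.mem_erase, Finset.mem_filter, Finset.mem_insert]
  constructor
  · intro h
    have he' := h.2 e (Or.inl rfl)
    rw [hends, Sym2.mem_iff] at he'
    push_neg at he'
    exact ⟨he'.2, he'.1, h.1, fun f hf => h.2 f (Or.inr hf)⟩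
  · rintro ⟨hv2, hv1, hv, hiso⟩
    refine ⟨hv, ?_⟩
    rintro f (rfl | hf)
    · rw [hends, Sym2.mem_iff]
      rintro (rfl | rfl)
      exacts [hv1 rfl, hv2 rfl]
    · exact hiso f hf

lemma nComp_insert (hends : G.ends e = s(v₁, v₂)) (hne : v₁ ≠ v₂)
    (hAv₁ : ∀ f ∈ A, v₁ ∉ G.ends f) (hv₁ : v₁ ∈ G.verts) (hv₂ : v₂ ∈ G.verts) :
    G.nComp A = G.nComp (insert e A) + 1 := by
  classical
  have hv₁P : v₁ ∈ G.verts.filter (fun v => ∀ f ∈ A, v ∉ G.ends f) :=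
    Finset.mem_filter.mpr ⟨hv₁, hAv₁⟩
  unfold nComp
  rw [iso_insert (A := A) hends]
  by_cases hd : ∀ f ∈ A, v₂ ∉ G.ends f
  · have hv₂P : v₂ ∈ (G.verts.filter (fun v => ∀ f ∈ A, v ∉ G.ends f)).erase v₁ :=
      Finset.mem_erase.mpr ⟨hne.symm, Finset.mem_filter.mpr ⟨hv₂, hd⟩⟩
    have h1 := Finset.card_erase_add_one hv₂P
    have h2 := Finset.card_erase_add_one hv₁P
    have h3 := nCov_insert_of_isolated hends hne hAv₁ hd
    omega
  · push_neg at hd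
    have h3 := nCov_insert_of_covered hends hne hAv₁ hd
    have hv₂P : v₂ ∉ (G.verts.filter (fun v => ∀ f ∈ A, v ∉ G.ends f)).erase v₁ := by
      simp only [Finset.mem_erase, Finset.mem_filter]
      rintro ⟨-, -, hiso'⟩
      obtain ⟨f, hf, hvf⟩ := hd
      exact hiso' f hf hvf
    rw [Finset.erase_eq_of_notMem hv₂P]
    have h2 := Finset.card_erase_add_one hv₁P
    omega

lemma contract_ends_eq (hAv₁ : ∀ f ∈ A, v₁ ∉ G.ends f) :
    ∀ f ∈ A, (G.contract e v₂ v₁).ends f = G.ends f := by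
  intro f hf
  show Sym2.map (fun w => if w = v₁ then v₂ else w) (G.ends f) = G.ends f
  calc Sym2.map (fun w => if w = v₁ then v₂ else w) (G.ends f)
      = Sym2.map (fun w => w) (G.ends f) :=
        Sym2.map_congr (fun x hx => if_neg (fun h : x = v₁ => hAv₁ f hf (h ▸ hx)))
    _ = G.ends f := congrFun Sym2.map_id' (G.ends f)

lemma contract_filter_eq (hv₂ : v₂ ∈ G.verts) (hne : v₁ ≠ v₂)
    (hAv₁ : ∀ f ∈ A, v₁ ∉ G.ends f) :
    (G.contract e v₂ v₁).verts.filter (fun v => ∀ f ∈ A, v ∉ (G.contract e v₂ v₁).ends f)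
      = (G.verts.filter (fun v => ∀ f ∈ A, v ∉ G.ends f)).erase v₁ := by
  classical
  have hverts : (G.contract e v₂ v₁).verts = G.verts.erase v₁ := by
    show insert v₂ (G.verts.erase v₁) = G.verts.erase v₁
    exact Finset.insert_eq_self.mpr (Finset.mem_erase.mpr ⟨hne.symm, hv₂⟩)
  rw [hverts, Finset.filter_erase]
  congr 1
  apply Finset.filter_congr
  intro v _
  constructor
  · intro h f hf
    exact (contract_ends_eq hAv₁ f hf) ▸ h f hf
  · intro h f hf
    rw [contract_ends_eq hAv₁ f hf]
    exact h f hf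

lemma nComp_contract (hv₁ : v₁ ∈ G.verts) (hv₂ : v₂ ∈ G.verts) (hne : v₁ ≠ v₂)
    (hAv₁ : ∀ f ∈ A, v₁ ∉ G.ends f) :
    G.nComp A = (G.contract e v₂ v₁).nComp A + 1 := by
  classical
  have hcov : G.nCov A = (G.contract e v₂ v₁).nCov A :=
    nCov_congr (fun f hf => (contract_ends_eq hAv₁ f hf).symm)
  unfold nComp
  rw [hcov, contract_filter_eq hv₂ hne hAv₁]
  have hcard := Finset.card_erase_add_one
    (Finset.mem_filter.mpr ⟨hv₁, hAv₁⟩ :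
      v₁ ∈ G.verts.filter (fun v => ∀ f ∈ A, v ∉ G.ends f))
  omega

lemma nCov_extract : (G.extract v₁ v₂).nCov A = G.nCov A :=
  nCov_congr (fun _ _ => rfl)

lemma nComp_extract (hv₂ : v₂ ∈ G.verts) (hne : v₁ ≠ v₂)
    (hAv₁ : ∀ f ∈ A, v₁ ∉ G.ends f) (hd : ∀ f ∈ A, v₂ ∉ G.ends f) :
    (G.contract e v₂ v₁).nComp A = (G.extract v₁ v₂).nComp A + 1 := by
  classical
  have hcov : (G.contract e v₂ v₁).nCov A = (G.extract v₁ v₂).nCov A :=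
    (nCov_congr (fun f hf => (contract_ends_eq hAv₁ f hf))).trans nCov_extract.symm
  have hfilter'' : (G.extract v₁ v₂).verts.filter
        (fun v => ∀ f ∈ A, v ∉ (G.extract v₁ v₂).ends f)
      = ((G.verts.filter (fun v => ∀ f ∈ A, v ∉ G.ends f)).erase v₁).erase v₂ := by
    show ((G.verts.erase v₁).erase v₂).filter (fun v => ∀ f ∈ A, v ∉ G.ends f) = _
    rw [Finset.filter_erase, Finset.filter_erase]
  unfold nComp
  rw [hcov, contract_filter_eq hv₂ hne hAv₁, hfilter'']
  have hv₂P : v₂ ∈ (G.verts.filter (fun v => ∀ f ∈ A, v ∉ G.ends f)).erase v₁ :=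
    Finset.mem_erase.mpr ⟨hne.symm, Finset.mem_filter.mpr ⟨hv₂, hd⟩⟩
  have hcard := Finset.card_erase_add_one hv₂P
  omega

end Count

end Multigraph

namespace Multigraph

lemma pendant_key {α β : Type} (G : Multigraph α β) (e : β) (v₁ v₂ : α)
    (he : e ∈ G.edges) (hends : G.ends e = s(v₁, v₂)) (hne : v₁ ≠ v₂)
    (hpendant : ∀ f ∈ G.edges, f ≠ e → v₁ ∉ G.ends f)
    (A : Finset β) (hA : A ⊆ G.edges.erase e) :
    (X 0 ^ G.nComp A * X 1 ^ A.card * X 2 ^ G.nCov A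
      + X 0 ^ G.nComp (insert e A) * X 1 ^ (insert e A).card * X 2 ^ G.nCov (insert e A)
      : MvPolynomial (Fin 3) ℤ)
    = (X 0 + X 1) * (X 0 ^ (G.contract e v₂ v₁).nComp A * X 1 ^ A.card
        * X 2 ^ (G.contract e v₂ v₁).nCov A)
      + (if ∀ f ∈ A, v₂ ∉ G.ends f then
          (X 0 * X 1 * X 2 - X 0 * X 1) * (X 0 ^ (G.extract v₁ v₂).nComp A * X 1 ^ A.card
            * X 2 ^ (G.extract v₁ v₂).nCov A) else 0) := by
  classical
  have hAv₁ : ∀ f ∈ A, v₁ ∉ G.ends f := fun f hf =>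
    hpendant f (Finset.mem_of_mem_erase (hA hf)) (Finset.ne_of_mem_erase (hA hf))
  have heA : e ∉ A := fun h => (Finset.ne_of_mem_erase (hA h)) rfl
  have hv₁ : v₁ ∈ G.verts :=
    G.ends_mem e he v₁ (by rw [hends]; exact Sym2.mem_iff.mpr (Or.inl rfl))
  have hv₂ : v₂ ∈ G.verts :=
    G.ends_mem e he v₂ (by rw [hends]; exact Sym2.mem_iff.mpr (Or.inr rfl))
  have hcard : (insert e A).card = A.card + 1 := Finset.card_insert_of_notMem heA
  have h1 : G.nComp A = G.nComp (insert e A) + 1 := nComp_insert hends hne hAv₁ hv₁ hv₂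
  have h2 : G.nComp A = (G.contract e v₂ v₁).nComp A + 1 := nComp_contract hv₁ hv₂ hne hAv₁
  have h3 : G.nCov A = (G.contract e v₂ v₁).nCov A :=
    nCov_congr (fun f hf => (contract_ends_eq hAv₁ f hf).symm)
  by_cases hd : ∀ f ∈ A, v₂ ∉ G.ends f
  · rw [if_pos hd]
    have h4 : G.nCov (insert e A) = G.nCov A + 1 := nCov_insert_of_isolated hends hne hAv₁ hd
    have h5 : (G.contract e v₂ v₁).nComp A = (G.extract v₁ v₂).nComp A + 1 :=
      nComp_extract hv₂ hne hAv₁ hd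
    have h6 : (G.contract e v₂ v₁).nCov A = (G.extract v₁ v₂).nCov A :=
      (nCov_congr (fun f hf => (contract_ends_eq hAv₁ f hf))).trans nCov_extract.symm
    have e1 : G.nComp A = (G.extract v₁ v₂).nComp A + 2 := by omega
    have e2 : G.nComp (insert e A) = (G.extract v₁ v₂).nComp A + 1 := by omega
    have e3 : G.nCov A = (G.extract v₁ v₂).nCov A := by omega
    have e4 : G.nCov (insert e A) = (G.extract v₁ v₂).nCov A + 1 := by omega
    rw [e1, e2, e4, e3, hcard, h5, h6]
    ring
  · rw [if_neg hd]
    push_neg at hd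
    have h4 : G.nCov (insert e A) = G.nCov A := nCov_insert_of_covered hends hne hAv₁ hd
    have e2 : G.nComp (insert e A) = (G.contract e v₂ v₁).nComp A := by omega
    have e4 : G.nCov (insert e A) = (G.contract e v₂ v₁).nCov A := by omega
    rw [h2, e2, e4, h3, hcard]
    ring

end Multigraph

theorem ccp_pendant_edge' {α β : Type} (G : Multigraph α β)
    (e : β) (he : e ∈ G.edges) (v₁ v₂ : α) (hends : G.ends e = s(v₁, v₂))
    (hne : v₁ ≠ v₂) (hpendant : ∀ f ∈ G.edges, f ≠ e → v₁ ∉ G.ends f) :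
    G.ccp = (X 0 + X 1) * (G.contract e v₂ v₁).ccp +
      (X 0 * X 1 * X 2 - X 0 * X 1) * (G.extract v₁ v₂).ccp := by
  classical
  have hv₁e : v₁ ∈ G.ends e := by rw [hends]; exact Sym2.mem_iff.mpr (Or.inl rfl)
  have hset : (G.edges.erase e).powerset.filter (fun A => ∀ f ∈ A, v₂ ∉ G.ends f)
      = (G.extract v₁ v₂).edges.powerset := by
    ext A
    simp only [Finset.mem_filter, Finset.mem_powerset]
    constructor
    · rintro ⟨hA, hd⟩ f hf
      have hfe := Finset.mem_erase.mp (hA hf)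
      exact Finset.mem_filter.mpr ⟨hfe.2, hpendant f hfe.2 hfe.1, hd f hf⟩
    · intro hA
      refine ⟨fun f hf => ?_, fun f hf => ?_⟩
      · have hm := Finset.mem_filter.mp (hA hf)
        exact Finset.mem_erase.mpr ⟨fun h => hm.2.1 (h ▸ hv₁e), hm.1⟩
      · exact (Finset.mem_filter.mp (hA hf)).2.2
  have hG' : (G.contract e v₂ v₁).edges = G.edges.erase e := rfl
  unfold Multigraph.ccp
  rw [hG', show G.edges = insert e (G.edges.erase e) from (Finset.insert_erase he).symm,
    Finset.sum_powerset_insert (Finset.notMem_erase e _), ← Finset.sum_add_distrib,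
    Finset.sum_congr rfl
      (fun A hA => Multigraph.pendant_key G e v₁ v₂ he hends hne hpendant A
        (Finset.mem_powerset.mp hA)),
    Finset.sum_add_distrib, ← Finset.mul_sum, ← Finset.sum_filter, hset, ← Finset.mul_sum]
  rw [Finset.erase_insert (Finset.notMem_erase e _)]


/-- Let `G` be a finite (multi)graph and `e` a pendant edge, i.e. an
edge with endpoints `v₁ ≠ v₂` such that the incident vertex `v₁` has degree `1` (no
other edge of `G` is incident to `v₁`).  Then
`C(G,x,y,z) = (x + y)·C(G/ₑ,x,y,z) + (xyz − xy)·C(G†ₑ,x,y,z)`. -/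
theorem ccp_pendant_edge {α β : Type} (G : Multigraph α β)
    (e : β) (he : e ∈ G.edges) (v₁ v₂ : α) (hends : G.ends e = s(v₁, v₂))
    (hne : v₁ ≠ v₂) (hpendant : ∀ f ∈ G.edges, f ≠ e → v₁ ∉ G.ends f) :
    G.ccp = (X 0 + X 1) * (G.contract e v₂ v₁).ccp +
      (X 0 * X 1 * X 2 - X 0 * X 1) * (G.extract v₁ v₂).ccp :=
  ccp_pendant_edge' G e he v₁ v₂ hends hne hpendant

end
end
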